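/- arXiv:1008.0940 — 4 statements merged into one kernel-verified Lean document; each statement's English description precedes it below -/
import Mathlib

section
/- Let μ be a probability measure on (0,∞) with distribution function F such that L(t) := 1 − F(t) is positive for all t and slowly varying at infinity. Then the renewal function U(t) = Σ_{n=0}^∞ μ^{*n}([0,t]) is finite for every t, and U(t)·(1 − F(t)) → 1 as t → ∞. -/
open MeasureTheory ProbabilityTheory Filter Set Topology ENNReal

/-- `n`-fold convolution power of a measure on `ℝ`, with `μ^{*0} = δ_0`. -/
noncomputable def convPow (μ : MeasureTheory.Measure ℝ) : ℕ → MeasureTheory.Measure ℝ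
  | 0 => MeasureTheory.Measure.dirac 0
  | n + 1 => MeasureTheory.Measure.conv (convPow μ n) μ

instance convPow_sfinite (μ : Measure ℝ) [SFinite μ] (n : ℕ) : SFinite (convPow μ n) := by
  induction n with
  | zero => exact inferInstanceAs (SFinite (Measure.dirac 0))
  | succ n ih => exact inferInstanceAs (SFinite (Measure.conv (convPow μ n) μ))

instance convPow_finite (μ : Measure ℝ) [IsFiniteMeasure μ] (n : ℕ) :
    IsFiniteMeasure (convPow μ n) := by
  induction n with
  | zero => exact inferInstanceAs (IsFiniteMeasure (Measure.dirac 0))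
  | succ n ih => exact inferInstanceAs (IsFiniteMeasure (Measure.conv (convPow μ n) μ))

lemma conv_apply (α β : Measure ℝ) {s : Set ℝ} (hs : MeasurableSet s) :
    Measure.conv α β s = (α.prod β) ((fun p : ℝ × ℝ => p.1 + p.2) ⁻¹' s) :=
  Measure.map_apply measurable_add hs

lemma conv_mono {α α' β β' : Measure ℝ} [SFinite β] [SFinite β']
    (hα : α ≤ α') (hβ : β ≤ β') {s : Set ℝ} (hs : MeasurableSet s) :
    Measure.conv α β s ≤ Measure.conv α' β' s := by
  rw [conv_apply _ _ hs, conv_apply _ _ hs]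
  have hA : MeasurableSet ((fun p : ℝ × ℝ => p.1 + p.2) ⁻¹' s) := measurable_add hs
  rw [Measure.prod_apply hA, Measure.prod_apply hA]
  calc ∫⁻ x, β (Prod.mk x ⁻¹' ((fun p : ℝ × ℝ => p.1 + p.2) ⁻¹' s)) ∂α
      ≤ ∫⁻ x, β' (Prod.mk x ⁻¹' ((fun p : ℝ × ℝ => p.1 + p.2) ⁻¹' s)) ∂α :=
        lintegral_mono fun x => hβ _
    _ ≤ _ := lintegral_mono' hα le_rfl

lemma convPow_le {κ μ : Measure ℝ} [SFinite κ] [SFinite μ] (h : κ ≤ μ) (n : ℕ) :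
    convPow κ n ≤ convPow μ n := by
  induction n with
  | zero => exact le_rfl
  | succ n ih =>
    refine (Measure.le_iff).2 fun s hs => ?_
    exact conv_mono ih h hs

lemma convPow_univ (κ : Measure ℝ) [SFinite κ] (n : ℕ) :
    convPow κ n Set.univ = (κ Set.univ) ^ n := by
  induction n with
  | zero => simp [convPow]
  | succ n ih =>
    show Measure.conv (convPow κ n) κ Set.univ = _
    rw [conv_apply _ _ MeasurableSet.univ]
    simp only [Set.preimage_univ]
    rw [← Set.univ_prod_univ, Measure.prod_prod, ih, pow_succ]

lemma convPow_neg_zero (κ : Measure ℝ) [SFinite κ] (h : κ (Set.Iic 0) = 0) (n : ℕ) :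
    convPow κ n (Set.Iio 0) = 0 := by
  induction n with
  | zero => simp [convPow]
  | succ n ih =>
    show Measure.conv (convPow κ n) κ (Set.Iio 0) = 0
    rw [conv_apply _ _ measurableSet_Iio]
    refine measure_mono_null (t := (Set.Iio 0 ×ˢ Set.univ) ∪ (Set.univ ×ˢ Set.Iic 0))
      (fun p hp => ?_) ?_
    · simp only [Set.mem_preimage, Set.mem_Iio] at hp
      by_contra hcon
      simp only [Set.mem_union, Set.mem_prod, Set.mem_univ, Set.mem_Iio, Set.mem_Iic,
        and_true, true_and, not_or, not_lt, not_le] at hcon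
      linarith [hcon.1, hcon.2]
    · refine measure_union_null ?_ ?_ <;> rw [Measure.prod_prod] <;> simp [ih, h]

lemma convPow_Icc_le (μ : Measure ℝ) [SFinite μ] (hsupp : μ (Set.Iic 0) = 0)
    {t : ℝ} (ht : 0 ≤ t) (n : ℕ) :
    convPow μ n (Set.Icc 0 t) ≤ (μ (Set.Ioc 0 t)) ^ n := by
  induction n with
  | zero => simp [convPow, ht]
  | succ n ih =>
    show Measure.conv (convPow μ n) μ (Set.Icc 0 t) ≤ _
    rw [conv_apply _ _ measurableSet_Icc]
    have hsub : (fun p : ℝ × ℝ => p.1 + p.2) ⁻¹' (Set.Icc 0 t) ⊆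
        (Set.Icc 0 t ×ˢ Set.Ioc 0 t) ∪ ((Set.Iio 0 ×ˢ Set.univ) ∪ (Set.univ ×ˢ Set.Iic 0)) := by
      rintro ⟨x, y⟩ hp
      simp only [Set.mem_preimage, Set.mem_Icc] at hp
      by_cases hx : x < 0
      · exact Or.inr (Or.inl ⟨hx, trivial⟩)
      · by_cases hy : y ≤ 0
        · exact Or.inr (Or.inr ⟨trivial, hy⟩)
        · push_neg at hx hy
          exact Or.inl ⟨⟨hx, by linarith [hp.2]⟩, ⟨hy, by linarith [hp.1]⟩⟩
    calc ((convPow μ n).prod μ) ((fun p : ℝ × ℝ => p.1 + p.2) ⁻¹' (Set.Icc 0 t))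
        ≤ ((convPow μ n).prod μ) (Set.Icc 0 t ×ˢ Set.Ioc 0 t) +
          (((convPow μ n).prod μ) ((Set.Iio 0 ×ˢ Set.univ) ∪ (Set.univ ×ˢ Set.Iic 0))) :=
          le_trans (measure_mono hsub) (measure_union_le _ _)
      _ ≤ (μ (Set.Ioc 0 t)) ^ n * μ (Set.Ioc 0 t) + 0 := by
          gcongr
          · rw [Measure.prod_prod]
            exact mul_le_mul_left ih _
          · refine le_of_eq (measure_union_null ?_ ?_) <;> rw [Measure.prod_prod] <;>
              simp [convPow_neg_zero μ hsupp n, hsupp]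
      _ = (μ (Set.Ioc 0 t)) ^ (n+1) := by rw [add_zero, pow_succ]

lemma convPow_moment (μ : Measure ℝ) [SFinite μ] (n : ℕ) :
    ∫⁻ x, ENNReal.ofReal x ∂(convPow μ n) ≤
      n * (∫⁻ x, ENNReal.ofReal x ∂μ) * (μ Set.univ) ^ (n - 1) := by
  induction n with
  | zero => simp [convPow, lintegral_dirac]
  | succ n ih =>
    have key : ∫⁻ x, ENNReal.ofReal x ∂(convPow μ (n+1)) ≤
        (∫⁻ x, ENNReal.ofReal x ∂(convPow μ n)) * μ Set.univ +
          (∫⁻ x, ENNReal.ofReal x ∂μ) * (convPow μ n) Set.univ := by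
      show ∫⁻ x, ENNReal.ofReal x ∂(Measure.conv (convPow μ n) μ) ≤ _
      rw [Measure.conv, lintegral_map (by fun_prop) measurable_add]
      calc ∫⁻ p : ℝ × ℝ, ENNReal.ofReal (p.1 + p.2) ∂((convPow μ n).prod μ)
          ≤ ∫⁻ p : ℝ × ℝ, (ENNReal.ofReal p.1 + ENNReal.ofReal p.2) ∂((convPow μ n).prod μ) :=
            lintegral_mono fun p => ENNReal.ofReal_add_le
        _ = (∫⁻ p : ℝ × ℝ, ENNReal.ofReal p.1 ∂((convPow μ n).prod μ)) +
            (∫⁻ p : ℝ × ℝ, ENNReal.ofReal p.2 ∂((convPow μ n).prod μ)) :=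
            lintegral_add_left (by fun_prop) _
        _ = (∫⁻ x, ENNReal.ofReal x ∂(convPow μ n)) * μ Set.univ +
            (∫⁻ x, ENNReal.ofReal x ∂μ) * (convPow μ n) Set.univ := by
            rw [lintegral_prod _ (by fun_prop), lintegral_prod _ (by fun_prop)]
            simp only [lintegral_const]
            rw [lintegral_mul_const _ (by fun_prop)]
    rw [convPow_univ] at key
    refine key.trans ?_
    rcases Nat.eq_zero_or_pos n with h0 | hpos
    · subst h0; simp [convPow, lintegral_dirac]
    · have h1 : n - 1 + 1 = n := Nat.succ_pred_eq_of_pos hpos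
      calc (∫⁻ x, ENNReal.ofReal x ∂(convPow μ n)) * μ Set.univ +
            (∫⁻ x, ENNReal.ofReal x ∂μ) * (μ Set.univ) ^ n
          ≤ (n * (∫⁻ x, ENNReal.ofReal x ∂μ) * (μ Set.univ) ^ (n-1)) * μ Set.univ +
            (∫⁻ x, ENNReal.ofReal x ∂μ) * (μ Set.univ) ^ n := by gcongr
        _ = (n + 1) * (∫⁻ x, ENNReal.ofReal x ∂μ) * (μ Set.univ) ^ ((n+1) - 1) := by
            have h2 : (μ Set.univ) ^ (n-1) * μ Set.univ = (μ Set.univ) ^ n := by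
              rw [← pow_succ, h1]
            rw [Nat.add_sub_cancel, mul_assoc ((n:ℝ≥0∞) * _), h2]
            push_cast
            ring
        _ = (↑(n+1) : ℝ≥0∞) * (∫⁻ x, ENNReal.ofReal x ∂μ) * (μ Set.univ) ^ ((n+1) - 1) := by
            push_cast
            ring

lemma convPow_Icc_ge (μ : Measure ℝ) [IsFiniteMeasure μ] {t : ℝ} (ht : 0 < t) (n : ℕ) :
    (μ (Set.Ioc 0 t)) ^ n -
      ((n : ℝ≥0∞) * (∫⁻ x in Set.Ioc 0 t, ENNReal.ofReal x ∂μ) * (μ (Set.Ioc 0 t)) ^ (n-1))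
        / ENNReal.ofReal t
      ≤ convPow μ n (Set.Icc 0 t) := by
  set κ := μ.restrict (Set.Ioc 0 t) with hκ
  have hκuniv : κ Set.univ = μ (Set.Ioc 0 t) := by
    rw [hκ, Measure.restrict_apply MeasurableSet.univ, Set.univ_inter]
  have hκIic : κ (Set.Iic 0) = 0 := by
    rw [hκ, Measure.restrict_apply measurableSet_Iic]
    convert measure_empty (μ := μ)
    ext x; simp only [Set.mem_inter_iff, Set.mem_Iic, Set.mem_Ioc, Set.mem_empty_iff_false,
      iff_false, not_and]
    exact fun hx h => absurd h (not_lt.2 hx)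
  have hle : convPow κ n (Set.Icc 0 t) ≤ convPow μ n (Set.Icc 0 t) :=
    Measure.le_iff'.1 (convPow_le Measure.restrict_le_self n) _
  refine le_trans ?_ hle
  have hmarkov : convPow κ n (Set.Ioi t) ≤
      ((n : ℝ≥0∞) * (∫⁻ x in Set.Ioc 0 t, ENNReal.ofReal x ∂μ) * (μ (Set.Ioc 0 t)) ^ (n-1))
        / ENNReal.ofReal t := by
    have h1 : ENNReal.ofReal t * convPow κ n (Set.Ioi t) ≤
        ∫⁻ x, ENNReal.ofReal x ∂(convPow κ n) := by
      refine le_trans ?_ (mul_meas_ge_le_lintegral₀ (by fun_prop) (ENNReal.ofReal t))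
      gcongr
      exact fun x hx => ENNReal.ofReal_le_ofReal (le_of_lt hx)
    rw [ENNReal.le_div_iff_mul_le (Or.inl (by simp [ht])) (Or.inl (by simp))]
    calc convPow κ n (Set.Ioi t) * ENNReal.ofReal t
        = ENNReal.ofReal t * convPow κ n (Set.Ioi t) := mul_comm _ _
      _ ≤ ∫⁻ x, ENNReal.ofReal x ∂(convPow κ n) := h1
      _ ≤ (n : ℝ≥0∞) * (∫⁻ x, ENNReal.ofReal x ∂κ) * (κ Set.univ) ^ (n-1) :=
          convPow_moment κ n
      _ = _ := by rw [hκuniv]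
  have hcover : (μ (Set.Ioc 0 t)) ^ n ≤ convPow κ n (Set.Icc 0 t) +
      ((n : ℝ≥0∞) * (∫⁻ x in Set.Ioc 0 t, ENNReal.ofReal x ∂μ) * (μ (Set.Ioc 0 t)) ^ (n-1))
        / ENNReal.ofReal t := by
    have huniv : (Set.univ : Set ℝ) ⊆ Set.Icc 0 t ∪ (Set.Iio 0 ∪ Set.Ioi t) := by
      intro x _
      rcases lt_or_ge x 0 with h | h
      · exact Or.inr (Or.inl h)
      · rcases le_or_gt x t with h' | h'
        · exact Or.inl ⟨h, h'⟩
        · exact Or.inr (Or.inr h')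
    calc (μ (Set.Ioc 0 t)) ^ n = convPow κ n Set.univ := by rw [convPow_univ, hκuniv]
      _ ≤ convPow κ n (Set.Icc 0 t) + convPow κ n (Set.Iio 0 ∪ Set.Ioi t) :=
          le_trans (measure_mono huniv) (measure_union_le _ _)
      _ ≤ convPow κ n (Set.Icc 0 t) + (convPow κ n (Set.Iio 0) + convPow κ n (Set.Ioi t)) := by
          gcongr; exact measure_union_le _ _
      _ ≤ _ := by rw [convPow_neg_zero κ hκIic, zero_add]; gcongr
  exact tsub_le_iff_right.2 hcover

section Analysis
variable {L m : ℝ → ℝ}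

lemma half_step (hpos : ∀ t, 0 < L t)
    (hhalf : Tendsto (fun t => L (2⁻¹ * t) / L t) atTop (𝓝 1)) {ε : ℝ} (hε : 0 < ε) :
    ∃ T : ℝ, 1 ≤ T ∧ ∀ s, T ≤ s → L (2⁻¹ * s) ≤ (1 + ε) * L s := by
  have hev : ∀ᶠ s in atTop, L (2⁻¹ * s) / L s < 1 + ε :=
    hhalf.eventually_lt_const (by linarith)
  obtain ⟨T₀, hT₀⟩ := eventually_atTop.1 hev
  refine ⟨max T₀ 1, le_max_right _ _, fun s hs => ?_⟩
  have h1 := hT₀ s (le_trans (le_max_left _ _) hs)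
  have h2 := hpos s
  calc L (2⁻¹ * s) = (L (2⁻¹ * s) / L s) * L s := by field_simp
    _ ≤ (1 + ε) * L s := by nlinarith [hpos (2⁻¹ * s)]

lemma chain_bound (hanti : Antitone L) (hpos : ∀ t, 0 < L t) {ε T : ℝ} (hε : 0 ≤ ε)
    (hT : 1 ≤ T) (hstep : ∀ s, T ≤ s → L (2⁻¹ * s) ≤ (1 + ε) * L s) :
    ∀ k j : ℕ, j ≤ k → ∀ t : ℝ, 2^k * T ≤ t → L (t / 2^j) ≤ (1 + ε)^j * L t := by
  intro k j
  induction j with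
  | zero => intro _ t _; simpa using le_rfl
  | succ j ih =>
    intro hjk t hkt
    have hjk' : j ≤ k := Nat.le_of_succ_le hjk
    have h2j : (2:ℝ)^j ≤ 2^k := pow_le_pow_right₀ (by norm_num) hjk'
    have hTpos : (0:ℝ) < T := lt_of_lt_of_le one_pos hT
    have htT : T ≤ t / 2^j := by
      rw [le_div_iff₀ (by positivity)]
      calc T * 2^j = 2^j * T := mul_comm _ _
        _ ≤ 2^k * T := by gcongr
        _ ≤ t := hkt
    have harg : t / 2^(j+1) = 2⁻¹ * (t / 2^j) := by
      rw [pow_succ]; ring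
    calc L (t / 2^(j+1)) = L (2⁻¹ * (t / 2^j)) := by rw [harg]
      _ ≤ (1 + ε) * L (t / 2^j) := hstep _ htT
      _ ≤ (1 + ε) * ((1 + ε)^j * L t) := by
          have := ih hjk' t hkt
          nlinarith
      _ = (1 + ε)^(j+1) * L t := by ring

lemma dyadic_block (hT : (1:ℝ) ≤ T) {t : ℝ} (ht : T ≤ t) :
    2^(Nat.log 2 ⌊t/T⌋₊) * T ≤ t ∧ t ≤ 2^(Nat.log 2 ⌊t/T⌋₊ + 1) * T := by
  have hTpos : (0:ℝ) < T := lt_of_lt_of_le one_pos hT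
  have hdiv1 : (1:ℝ) ≤ t / T := (one_le_div hTpos).2 ht
  have hn1 : 1 ≤ ⌊t/T⌋₊ := Nat.le_floor (by exact_mod_cast hdiv1)
  set n := ⌊t/T⌋₊ with hn
  set J := Nat.log 2 n with hJ
  constructor
  · have h1 : (2:ℕ)^J ≤ n := Nat.pow_log_le_self 2 (by omega)
    have h2 : ((2:ℝ))^J ≤ n := by exact_mod_cast h1
    have h3 : (n:ℝ) ≤ t / T := Nat.floor_le (by positivity)
    rw [← le_div_iff₀ hTpos]
    exact le_trans h2 h3
  · have h1 : n < 2^(J+1) := Nat.lt_pow_succ_log_self (by norm_num) n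
    have h2 : t / T < n + 1 := Nat.lt_floor_add_one _
    have h3 : (n:ℝ) + 1 ≤ 2^(J+1) := by exact_mod_cast Nat.succ_le_of_lt h1
    rw [← div_le_iff₀ hTpos]
    linarith

lemma tL_atTop (hanti : Antitone L) (hpos : ∀ t, 0 < L t)
    (hhalf : Tendsto (fun t => L (2⁻¹ * t) / L t) atTop (𝓝 1)) :
    Tendsto (fun t => t * L t) atTop atTop := by
  obtain ⟨T, hT1, hstep⟩ := half_step hpos hhalf (by norm_num : (0:ℝ) < 1/2)
  have hTpos : (0:ℝ) < T := lt_of_lt_of_le one_pos hT1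
  -- lower bound on dyadic points
  have hlow : ∀ k : ℕ, (2/3 : ℝ)^k * L T ≤ L (2^k * T) := by
    intro k
    induction k with
    | zero => simp
    | succ k ih =>
      have hs : T ≤ 2^(k+1) * T := le_mul_of_one_le_left hTpos.le (one_le_pow₀ (by norm_num))
      have h1 := hstep _ hs
      have harg : 2⁻¹ * (2^(k+1) * T) = 2^k * T := by ring
      rw [harg] at h1
      have h2 : (2/3 : ℝ) * L (2^k * T) ≤ L (2^(k+1) * T) := by linarith
      calc (2/3 : ℝ)^(k+1) * L T = (2/3) * ((2/3)^k * L T) := by ring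
        _ ≤ (2/3) * L (2^k * T) := by nlinarith
        _ ≤ L (2^(k+1) * T) := h2
  have hblock : ∀ k : ℕ, ∀ t : ℝ, 2^k * T ≤ t →
      (2/3) * (4/3 : ℝ)^k * (T * L T) ≤ t * L t := by
    intro k t hkt
    have htT : T ≤ t := le_trans (le_mul_of_one_le_left hTpos.le (one_le_pow₀ (by norm_num))) hkt
    obtain ⟨hb1, hb2⟩ := dyadic_block hT1 htT
    set J := Nat.log 2 ⌊t/T⌋₊ with hJ
    have hJk : k ≤ J := by
      have h2k : (2:ℕ)^k ≤ ⌊t/T⌋₊ := by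
        refine Nat.le_floor ?_
        push_cast
        rw [le_div_iff₀ hTpos]
        exact le_trans (le_of_eq rfl) hkt
      exact (Nat.le_log_iff_pow_le (b := 2) (by norm_num) (Nat.one_le_iff_ne_zero.1 (le_trans Nat.one_le_two_pow h2k))).2 h2k
    have hLt : L (2^(J+1) * T) ≤ L t := hanti hb2
    calc (2/3) * (4/3 : ℝ)^k * (T * L T) ≤ (2/3) * (4/3 : ℝ)^J * (T * L T) := by
          have : (4/3 : ℝ)^k ≤ (4/3)^J := pow_le_pow_right₀ (by norm_num) hJk
          nlinarith [mul_pos hTpos (hpos T)]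
      _ = (2^J * T) * ((2/3)^(J+1) * L T) := by
          rw [show ((4:ℝ)/3) = 2 * (2/3) by norm_num, mul_pow]
          ring
      _ ≤ (2^J * T) * L (2^(J+1) * T) := by
          have := hlow (J+1)
          have h2JT : (0:ℝ) < 2^J * T := by positivity
          nlinarith
      _ ≤ t * L t := by
          have h1 : (0:ℝ) < L (2^(J+1) * T) := hpos _
          nlinarith [hpos t]
  rw [tendsto_atTop]
  intro b
  have hc : (0:ℝ) < (2/3) * (T * L T) := mul_pos (by norm_num) (mul_pos hTpos (hpos T))
  obtain ⟨k, hk⟩ : ∃ k : ℕ, b ≤ (2/3) * (4/3 : ℝ)^k * (T * L T) := by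
    obtain ⟨k, hk⟩ := (tendsto_pow_atTop_atTop_of_one_lt (by norm_num : (1:ℝ) < 4/3)).eventually_ge_atTop (b / ((2/3) * (T * L T))) |>.exists
    refine ⟨k, ?_⟩
    rw [div_le_iff₀ hc] at hk
    calc b ≤ (4/3:ℝ)^k * ((2/3) * (T * L T)) := hk
      _ = (2/3) * (4/3 : ℝ)^k * (T * L T) := by ring
  filter_upwards [eventually_ge_atTop (2^k * T)] with t ht
  exact le_trans hk (hblock k t ht)

lemma ratio_tendsto_zero (hanti : Antitone L) (hpos : ∀ t, 0 < L t)
    (hhalf : Tendsto (fun t => L (2⁻¹ * t) / L t) atTop (𝓝 1))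
    (hm0 : ∀ t, 0 ≤ m t) (hmle : ∀ t, 0 < t → m t ≤ t)
    (hdiff : ∀ a b : ℝ, 0 < a → a ≤ b → m b - m a ≤ b * (L a - L b)) :
    Tendsto (fun t => m t / (t * L t)) atTop (𝓝 0) := by
  rw [Metric.tendsto_nhds]
  intro δ hδ
  set ε := min (δ/10) (1/2) with hε
  have hεpos : 0 < ε := lt_min (by linarith) (by norm_num)
  have hεhalf : ε ≤ 1/2 := min_le_right _ _
  have hεδ : ε ≤ δ/10 := min_le_left _ _
  obtain ⟨T, hT1, hstep⟩ := half_step hpos hhalf hεpos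
  have hTpos : (0:ℝ) < T := lt_of_lt_of_le one_pos hT1
  have htL := tL_atTop hanti hpos hhalf
  filter_upwards [eventually_ge_atTop T, eventually_ge_atTop (1:ℝ),
    htL.eventually_ge_atTop (2*T*(4/δ))] with t htT ht1 htL2
  have htpos : (0:ℝ) < t := lt_of_lt_of_le one_pos ht1
  have hLpos := hpos t
  have htLpos : (0:ℝ) < t * L t := by positivity
  -- core estimate : m t ≤ 4ε t L t + 2 T
  obtain ⟨hb1, hb2⟩ := dyadic_block hT1 htT
  set J := Nat.log 2 ⌊t/T⌋₊ with hJ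
  have hchain := chain_bound hanti hpos hεpos.le hT1 hstep J
  -- telescoping
  have htel : ∑ j ∈ Finset.range J, (m (t/2^j) - m (t/2^(j+1))) = m (t/2^0) - m (t/2^J) :=
    Finset.sum_range_sub' (fun j => m (t/2^j)) J
  have hterm : ∀ j ∈ Finset.range J, m (t/2^j) - m (t/2^(j+1)) ≤
      ε * (t * L t) * ((1+ε)/2)^j := by
    intro j hjr
    have hjJ : j ≤ J := le_of_lt (Finset.mem_range.1 hjr)
    have hjJ' : j + 1 ≤ J := Finset.mem_range.1 hjr
    have ha : (0:ℝ) < t / 2^(j+1) := by positivity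
    have hab : t / 2^(j+1) ≤ t / 2^j := by
      apply div_le_div_of_nonneg_left htpos.le (by positivity)
      exact pow_le_pow_right₀ (by norm_num) (Nat.le_succ j)
    have h1 := hdiff _ _ ha hab
    -- L (t/2^(j+1)) ≤ (1+ε) * L (t/2^j)
    have htTj : T ≤ t / 2^j := by
      rw [le_div_iff₀ (by positivity)]
      calc T * 2^j = 2^j * T := mul_comm _ _
        _ ≤ 2^J * T := by gcongr <;> norm_num
        _ ≤ t := hb1
    have h2 : L (t/2^(j+1)) ≤ (1+ε) * L (t/2^j) := by
      have := hstep _ htTj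
      have harg : t / 2^(j+1) = 2⁻¹ * (t / 2^j) := by rw [pow_succ]; ring
      rw [harg]; exact this
    have h3 : L (t/2^j) ≤ (1+ε)^j * L t := hchain j hjJ t hb1
    have h4 : L (t/2^(j+1)) - L (t/2^j) ≤ ε * ((1+ε)^j * L t) := by
      nlinarith [hpos (t/2^j)]
    have h5 : t / 2^j ≤ t := by
      apply div_le_self htpos.le (one_le_pow₀ (by norm_num))
    calc m (t/2^j) - m (t/2^(j+1)) ≤ (t/2^j) * (L (t/2^(j+1)) - L (t/2^j)) := h1
      _ ≤ (t/2^j) * (ε * ((1+ε)^j * L t)) := by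
          apply mul_le_mul_of_nonneg_left h4 (by positivity)
      _ = ε * (t * L t) * ((1+ε)/2)^j := by
          rw [div_pow]
          field_simp
  have hgeom : ∑ j ∈ Finset.range J, ((1+ε)/2 : ℝ)^j ≤ 4 := by
    have hr1 : ((1+ε)/2 : ℝ) < 1 := by
      have : ε < 1 := lt_of_le_of_lt hεhalf (by norm_num)
      linarith
    have hrJ : (0:ℝ) ≤ ((1+ε)/2)^J := by positivity
    rw [geom_sum_eq (ne_of_lt hr1)]
    rw [div_le_iff_of_neg (by linarith : ((1+ε)/2 : ℝ) - 1 < 0)]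
    have hquarter : ((1+ε)/2 : ℝ) ≤ 3/4 := by linarith
    nlinarith
  have hsum : m t - m (t/2^J) ≤ ε * (t * L t) * 4 := by
    have h0 : t/2^0 = t := by norm_num
    calc m t - m (t/2^J) = ∑ j ∈ Finset.range J, (m (t/2^j) - m (t/2^(j+1))) := by
          rw [htel, h0]
      _ ≤ ∑ j ∈ Finset.range J, ε * (t * L t) * ((1+ε)/2)^j := Finset.sum_le_sum hterm
      _ = ε * (t * L t) * ∑ j ∈ Finset.range J, ((1+ε)/2)^j := by rw [Finset.mul_sum]
      _ ≤ ε * (t * L t) * 4 := by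
          apply mul_le_mul_of_nonneg_left hgeom (by positivity)
  have hmJ : m (t/2^J) ≤ 2*T := by
    have h1 : m (t/2^J) ≤ t/2^J := hmle _ (by positivity)
    have h2 : t/2^J ≤ 2*T := by
      rw [div_le_iff₀ (by positivity)]
      calc t ≤ 2^(J+1) * T := hb2
        _ = 2*T * 2^J := by rw [pow_succ]; ring
    linarith
  have hmt : m t ≤ 4*ε*(t*L t) + 2*T := by linarith
  have hratio : m t / (t*L t) ≤ 4*ε + 2*T/(t*L t) := by
    rw [div_le_iff₀ htLpos, add_mul, div_mul_cancel₀ _ htLpos.ne']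
    linarith
  have h2T : 2*T/(t*L t) ≤ δ/4 := by
    rw [div_le_iff₀ htLpos]
    have h8 : (0:ℝ) < 4/δ := by positivity
    calc 2*T = (2*T*(4/δ)) * (δ/4) := by field_simp
      _ ≤ (t*L t) * (δ/4) := by nlinarith
      _ = δ/4 * (t*L t) := mul_comm _ _
  rw [Real.dist_eq, sub_zero, abs_of_nonneg (div_nonneg (hm0 t) htLpos.le)]
  have : 4*ε ≤ 4*(δ/10) := by linarith
  calc m t / (t*L t) ≤ 4*ε + 2*T/(t*L t) := hratio
    _ ≤ 4*(δ/10) + δ/4 := by linarith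
    _ < δ := by linarith
end Analysis

/-- **Renewal function for slowly varying tails.** If `μ` is a probability
measure on `(0,∞)` whose distribution function `F(t) = μ((0,t])` has positive,
slowly varying upper tail `1 - F`, then the renewal function
`U(t) = Σ_n μ^{*n}([0,t])` is finite and `U(t)·(1 - F(t)) → 1` as `t → ∞`. -/
theorem renewal_function_slowly_varying
    (μ : Measure ℝ) [IsProbabilityMeasure μ]
    (hsupp : μ (Set.Iic (0 : ℝ)) = 0)
    (F : ℝ → ℝ) (hF : ∀ t, F t = (μ (Set.Ioc (0 : ℝ) t)).toReal)
    (hFtail : ∀ t : ℝ, 0 < 1 - F t)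
    (hFslow : ∀ c : ℝ, 0 < c →
      Tendsto (fun t : ℝ => (1 - F (c * t)) / (1 - F t)) atTop (𝓝 1))
    (U : ℝ → ℝ≥0∞)
    (hU : ∀ t, U t = ∑' n : ℕ, convPow μ n (Set.Icc 0 t)) :
    (∀ t : ℝ, U t < ⊤) ∧
      Tendsto (fun t : ℝ => (U t).toReal * (1 - F t)) atTop (𝓝 1) := by
  -- basic facts about F
  have hFq_ne_top : ∀ t : ℝ, μ (Set.Ioc 0 t) ≠ ⊤ := fun t => measure_ne_top _ _
  have hFq_le_one : ∀ t : ℝ, μ (Set.Ioc 0 t) ≤ 1 := fun t => prob_le_one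
  have hF0 : ∀ t, 0 ≤ F t := fun t => (hF t) ▸ ENNReal.toReal_nonneg
  have hF1 : ∀ t, F t < 1 := fun t => by have := hFtail t; linarith
  have hFqlt : ∀ t : ℝ, μ (Set.Ioc 0 t) < 1 := by
    intro t
    rcases lt_or_eq_of_le (hFq_le_one t) with h | h
    · exact h
    · exfalso
      have : F t = 1 := by rw [hF t, h]; simp
      linarith [hF1 t]
  -- upper bound on U in ℝ≥0∞
  have hUle : ∀ t : ℝ, 0 ≤ t → U t ≤ (1 - μ (Set.Ioc 0 t))⁻¹ := by
    intro t ht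
    rw [hU t, ← ENNReal.tsum_geometric]
    exact ENNReal.tsum_le_tsum (fun n => convPow_Icc_le μ hsupp ht n)
  have hUfin : ∀ t : ℝ, U t < ⊤ := by
    intro t
    rcases le_or_gt 0 t with ht | ht
    · refine lt_of_le_of_lt (hUle t ht) ?_
      rw [ENNReal.inv_lt_top]
      exact tsub_pos_of_lt (hFqlt t)
    · rw [hU t]
      have : ∀ n : ℕ, convPow μ n (Set.Icc 0 t) = 0 := by
        intro n
        rw [Set.Icc_eq_empty (not_le.2 ht), measure_empty]
      simp [this]
  refine ⟨hUfin, ?_⟩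
  -- the tail function L
  set L : ℝ → ℝ := fun t => 1 - F t with hL
  have hLpos : ∀ t, 0 < L t := hFtail
  have hFmono : Monotone F := by
    intro a b hab
    rw [hF a, hF b]
    exact ENNReal.toReal_mono (hFq_ne_top b) (measure_mono (Set.Ioc_subset_Ioc_right hab))
  have hLanti : Antitone L := fun a b hab => by
    simp only [hL]; linarith [hFmono hab]
  have hhalf : Tendsto (fun t => L (2⁻¹ * t) / L t) atTop (𝓝 1) := hFslow 2⁻¹ (by norm_num)
  -- the truncated mean function
  set mf : ℝ → ℝ := fun s => (∫⁻ x in Set.Ioc 0 s, ENNReal.ofReal x ∂μ).toReal with hmf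
  have hint_le : ∀ s : ℝ, 0 ≤ s → (∫⁻ x in Set.Ioc 0 s, ENNReal.ofReal x ∂μ) ≤
      ENNReal.ofReal s := by
    intro s hs
    calc (∫⁻ x in Set.Ioc 0 s, ENNReal.ofReal x ∂μ)
        ≤ ∫⁻ _ in Set.Ioc 0 s, ENNReal.ofReal s ∂μ := by
          refine setLIntegral_mono measurable_const (fun x hx => ?_)
          exact ENNReal.ofReal_le_ofReal hx.2
      _ = ENNReal.ofReal s * μ (Set.Ioc 0 s) := by rw [setLIntegral_const]
      _ ≤ ENNReal.ofReal s * 1 := by gcongr; exact prob_le_one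
      _ = ENNReal.ofReal s := mul_one _
  have hint_ne_top : ∀ s : ℝ, (∫⁻ x in Set.Ioc 0 s, ENNReal.ofReal x ∂μ) ≠ ⊤ := by
    intro s
    rcases le_or_gt 0 s with hs | hs
    · exact ne_top_of_le_ne_top ENNReal.ofReal_ne_top (hint_le s hs)
    · rw [Set.Ioc_eq_empty (by linarith), Measure.restrict_empty, lintegral_zero_measure]
      exact ENNReal.zero_ne_top
  have hm0 : ∀ t, 0 ≤ mf t := fun t => ENNReal.toReal_nonneg
  have hmle : ∀ s, 0 < s → mf s ≤ s := by
    intro s hs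
    calc mf s ≤ (ENNReal.ofReal s).toReal :=
        ENNReal.toReal_mono ENNReal.ofReal_ne_top (hint_le s hs.le)
      _ = s := ENNReal.toReal_ofReal hs.le
  have hdiff : ∀ a b : ℝ, 0 < a → a ≤ b → mf b - mf a ≤ b * (L a - L b) := by
    intro a b ha hab
    have hunion : Set.Ioc 0 b = Set.Ioc 0 a ∪ Set.Ioc a b := (Set.Ioc_union_Ioc_eq_Ioc ha.le hab).symm
    have hdisj : Disjoint (Set.Ioc (0:ℝ) a) (Set.Ioc a b) := Set.Ioc_disjoint_Ioc_of_le le_rfl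
    have hsplit : (∫⁻ x in Set.Ioc 0 b, ENNReal.ofReal x ∂μ) =
        (∫⁻ x in Set.Ioc 0 a, ENNReal.ofReal x ∂μ) + (∫⁻ x in Set.Ioc a b, ENNReal.ofReal x ∂μ) := by
      rw [hunion, lintegral_union measurableSet_Ioc hdisj]
    have hI2_ne : (∫⁻ x in Set.Ioc a b, ENNReal.ofReal x ∂μ) ≠ ⊤ :=
      ne_top_of_le_ne_top (hint_ne_top b) (by rw [hsplit]; exact le_add_self)
    have hmb : mf b = mf a + (∫⁻ x in Set.Ioc a b, ENNReal.ofReal x ∂μ).toReal := by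
      rw [hmf]
      simp only
      rw [hsplit, ENNReal.toReal_add (hint_ne_top a) hI2_ne]
    have hmeas_split : μ (Set.Ioc 0 b) = μ (Set.Ioc 0 a) + μ (Set.Ioc a b) := by
      rw [hunion, measure_union hdisj measurableSet_Ioc]
    have hLab : L a - L b = (μ (Set.Ioc a b)).toReal := by
      simp only [hL, hF]
      rw [hmeas_split, ENNReal.toReal_add (hFq_ne_top a) (measure_ne_top _ _)]
      ring
    have hI2_le : (∫⁻ x in Set.Ioc a b, ENNReal.ofReal x ∂μ) ≤
        ENNReal.ofReal b * μ (Set.Ioc a b) := by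
      calc (∫⁻ x in Set.Ioc a b, ENNReal.ofReal x ∂μ)
          ≤ ∫⁻ _ in Set.Ioc a b, ENNReal.ofReal b ∂μ := by
            refine setLIntegral_mono measurable_const (fun x hx => ?_)
            exact ENNReal.ofReal_le_ofReal hx.2
        _ = ENNReal.ofReal b * μ (Set.Ioc a b) := by rw [setLIntegral_const]
    have hI2r : (∫⁻ x in Set.Ioc a b, ENNReal.ofReal x ∂μ).toReal ≤ b * (μ (Set.Ioc a b)).toReal := by
      calc (∫⁻ x in Set.Ioc a b, ENNReal.ofReal x ∂μ).toReal
          ≤ (ENNReal.ofReal b * μ (Set.Ioc a b)).toReal := by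
            refine ENNReal.toReal_mono ?_ hI2_le
            exact ENNReal.mul_ne_top ENNReal.ofReal_ne_top (measure_ne_top _ _)
        _ = b * (μ (Set.Ioc a b)).toReal := by
            rw [ENNReal.toReal_mul, ENNReal.toReal_ofReal (by linarith)]
    rw [hmb, hLab]
    linarith
  have hratio := ratio_tendsto_zero hLanti hLpos hhalf hm0 hmle hdiff
  -- the upper estimate
  have hupper : ∀ t : ℝ, 0 ≤ t → (U t).toReal * L t ≤ 1 := by
    intro t ht
    have h1 : (1 - μ (Set.Ioc 0 t))⁻¹ ≠ ⊤ := by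
      rw [Ne, ENNReal.inv_eq_top, tsub_eq_zero_iff_le]
      exact not_le.2 (hFqlt t)
    have h2 : (U t).toReal ≤ ((1 - μ (Set.Ioc 0 t))⁻¹).toReal :=
      ENNReal.toReal_mono h1 (hUle t ht)
    have h3 : ((1 - μ (Set.Ioc 0 t))⁻¹).toReal = (L t)⁻¹ := by
      rw [ENNReal.toReal_inv, ENNReal.toReal_sub_of_le (hFq_le_one t) ENNReal.one_ne_top]
      simp [hL, hF]
    rw [h3] at h2
    have hLt := hLpos t
    calc (U t).toReal * L t ≤ (L t)⁻¹ * L t := mul_le_mul_of_nonneg_right h2 hLt.le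
      _ = 1 := inv_mul_cancel₀ (ne_of_gt hLt)
  -- the lower estimate
  have hlower : ∀ t : ℝ, 1 ≤ t → 1 - mf t / (t * L t) ≤ (U t).toReal * L t := by
    intro t ht
    have htpos : (0:ℝ) < t := lt_of_lt_of_le one_pos ht
    set Fr := F t with hFr
    have hFr0 : 0 ≤ Fr := hF0 t
    have hFr1 : Fr < 1 := hF1 t
    have hnorm : ‖Fr‖ < 1 := by rw [Real.norm_eq_abs, abs_of_nonneg hFr0]; exact hFr1
    set a : ℕ → ℝ := fun n => (convPow μ n (Set.Icc 0 t)).toReal with ha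
    have hUr : (U t).toReal = ∑' n, a n := by
      rw [hU t]
      exact ENNReal.tsum_toReal_eq (fun n => measure_ne_top _ _)
    have ha_le : ∀ n, a n ≤ Fr ^ n := by
      intro n
      rw [ha]
      calc (convPow μ n (Set.Icc 0 t)).toReal
          ≤ ((μ (Set.Ioc 0 t)) ^ n).toReal :=
            ENNReal.toReal_mono (ENNReal.pow_ne_top (hFq_ne_top t)) (convPow_Icc_le μ hsupp htpos.le n)
        _ = Fr ^ n := by rw [ENNReal.toReal_pow, ← hF]
    have ha_sum : Summable a :=
      Summable.of_nonneg_of_le (fun n => ENNReal.toReal_nonneg) ha_le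
        (summable_geometric_of_lt_one hFr0 hFr1)
    -- geometric-type series
    have hs_geo : Summable (fun n : ℕ => Fr ^ n) := summable_geometric_of_lt_one hFr0 hFr1
    have hs_ngeo : Summable (fun n : ℕ => (n:ℝ) * Fr ^ n) := by
      have := summable_pow_mul_geometric_of_norm_lt_one 1 hnorm (R := ℝ)
      simpa using this
    set g : ℕ → ℝ := fun n => (n:ℝ) * Fr ^ (n-1) with hg
    have hg_succ : ∀ n : ℕ, g (n+1) = ((n:ℝ)+1) * Fr ^ n := by
      intro n; rw [hg]; simp only [Nat.add_sub_cancel]; push_cast; ring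
    have hs_shift : Summable (fun n : ℕ => g (n+1)) := by
      have : Summable (fun n : ℕ => ((n:ℝ)+1) * Fr ^ n) := by
        have := hs_ngeo.add hs_geo
        convert this using 2 with n
        ring
      exact this.congr (fun n => (hg_succ n).symm)
    have hs_g : Summable g := (summable_nat_add_iff 1).1 hs_shift
    have htsum_g : ∑' n, g n = (1 - Fr)⁻¹ ^ 2 := by
      rw [Summable.tsum_eq_zero_add hs_g]
      have h0 : g 0 = 0 := by simp [hg]
      rw [h0, zero_add]
      have h1 : ∑' n : ℕ, g (n+1) = ∑' n : ℕ, ((n:ℝ) * Fr ^ n + Fr ^ n) := by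
        refine tsum_congr (fun n => ?_)
        rw [hg_succ n]; ring
      rw [h1, Summable.tsum_add hs_ngeo hs_geo, tsum_geometric_of_lt_one hFr0 hFr1,
        tsum_coe_mul_geometric_of_norm_lt_one hnorm]
      have hne : (1:ℝ) - Fr ≠ 0 := by linarith
      field_simp
      ring
    set c : ℝ := mf t / t with hc
    have hc0 : 0 ≤ c := div_nonneg (hm0 t) htpos.le
    set b : ℕ → ℝ := fun n => Fr ^ n - c * g n with hb
    have hb_le : ∀ n, b n ≤ a n := by
      intro n
      -- ℝ≥0∞ inequality
      have hkey := convPow_Icc_ge μ htpos n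
      set Iq := ∫⁻ x in Set.Ioc 0 t, ENNReal.ofReal x ∂μ with hIq
      set Bq := ((n : ℝ≥0∞) * Iq * (μ (Set.Ioc 0 t)) ^ (n-1)) / ENNReal.ofReal t with hBq
      have hBq_ne : Bq ≠ ⊤ := by
        rw [hBq, div_eq_mul_inv]
        refine ENNReal.mul_ne_top (ENNReal.mul_ne_top (ENNReal.mul_ne_top ?_ (hint_ne_top t))
          (ENNReal.pow_ne_top (hFq_ne_top t))) ?_
        · exact ENNReal.natCast_ne_top n
        · rw [Ne, ENNReal.inv_eq_top]
          exact (ENNReal.ofReal_pos.2 htpos).ne'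
      have hBqr : Bq.toReal = c * g n := by
        have h1 : Bq.toReal = (n : ℝ) * (mf t) * Fr ^ (n-1) / t := by
          rw [hBq, ENNReal.toReal_div, ENNReal.toReal_mul, ENNReal.toReal_mul,
            ENNReal.toReal_natCast, ENNReal.toReal_pow, ENNReal.toReal_ofReal htpos.le, ← hF]
        rw [h1, hc, hg]
        ring
      have hFqn : ((μ (Set.Ioc 0 t)) ^ n).toReal = Fr ^ n := by
        rw [ENNReal.toReal_pow, ← hF]
      rcases le_or_gt ((μ (Set.Ioc 0 t)) ^ n) Bq with hcase | hcase
      · -- lower bound is nonpositive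
        have h1 : Fr ^ n ≤ c * g n := by
          rw [← hFqn, ← hBqr]
          exact ENNReal.toReal_mono hBq_ne hcase
        have h2 : 0 ≤ a n := ENNReal.toReal_nonneg
        rw [hb]; simp only; linarith
      · have h1 : ((μ (Set.Ioc 0 t)) ^ n - Bq).toReal = Fr ^ n - c * g n := by
          rw [ENNReal.toReal_sub_of_le hcase.le (ENNReal.pow_ne_top (hFq_ne_top t)), hFqn, hBqr]
        have h2 : ((μ (Set.Ioc 0 t)) ^ n - Bq).toReal ≤ a n :=
          ENNReal.toReal_mono (measure_ne_top _ _) hkey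
        rw [hb]; simp only; rw [← h1]; exact h2
    have hb_sum : Summable b := hs_geo.sub (hs_g.mul_left c)
    have htsum_b : ∑' n, b n = (1 - Fr)⁻¹ - c * ((1 - Fr)⁻¹ ^ 2) := by
      rw [hb]
      rw [Summable.tsum_sub hs_geo (hs_g.mul_left c), tsum_mul_left, htsum_g,
        tsum_geometric_of_lt_one hFr0 hFr1]
    have hsum_le : ∑' n, b n ≤ ∑' n, a n := Summable.tsum_le_tsum hb_le hb_sum ha_sum
    -- put everything together
    have hLt : L t = 1 - Fr := rfl
    have hLtpos := hLpos t
    have hLne : L t ≠ 0 := ne_of_gt hLtpos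
    rw [hUr]
    have h2 : ((1 - Fr)⁻¹ - c * ((1 - Fr)⁻¹ ^ 2)) * L t = 1 - mf t / (t * L t) := by
      rw [hLt, hc]
      have hne : (1:ℝ) - Fr ≠ 0 := by rw [← hLt]; exact hLne
      field_simp
    calc 1 - mf t / (t * L t) = ((1 - Fr)⁻¹ - c * ((1 - Fr)⁻¹ ^ 2)) * L t := h2.symm
      _ = (∑' n, b n) * L t := by rw [htsum_b]
      _ ≤ (∑' n, a n) * L t := by nlinarith
  -- final squeeze
  have hlow_t : Tendsto (fun t => 1 - mf t / (t * L t)) atTop (𝓝 1) := by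
    have := tendsto_const_nhds (α := ℝ) (x := (1:ℝ)) (f := atTop) |>.sub hratio
    simpa using this
  refine tendsto_of_tendsto_of_tendsto_of_le_of_le' hlow_t tendsto_const_nhds ?_ ?_
  · filter_upwards [eventually_ge_atTop (1:ℝ)] with t ht
    exact hlower t ht
  · filter_upwards [eventually_ge_atTop (0:ℝ)] with t ht
    exact hupper t ht
end

section
/- Let (f_n)_{n≥0} be a sequence with 0 ≤ f_n ≤ 1 for all n, and suppose there are constants C > 0, K > 0 and n_0 ≥ 3 such that |f_n − C/log n| ≤ K·(log log n)/(log n)^2 for all n ≥ n_0. Then the Poissonization G(x) := e^{−x}·Σ_{n=0}^∞ f_n·x^n/n! satisfies the same asymptotic expansion: there exist K' > 0 and x_0 such that |G(x) − C/log x| ≤ K'·(log log x)/(log x)^2 for all x ≥ x_0. -/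
open Filter Topology
lemma aux_exp_tsum (x : ℝ) : ∑' n : ℕ, x ^ n / n.factorial = Real.exp x := by
  rw [Real.exp_eq_exp_ℝ, NormedSpace.exp_eq_tsum_div]

lemma aux_shift1 (x : ℝ) (n : ℕ) :
    ((n + 1 : ℕ) : ℝ) * (x ^ (n + 1) / (n + 1).factorial) = x * (x ^ n / n.factorial) := by
  have h0 : ((n.factorial : ℝ)) ≠ 0 := Nat.cast_ne_zero.2 n.factorial_ne_zero
  have h1 : ((n : ℝ) + 1) ≠ 0 := by positivity
  rw [Nat.factorial_succ]
  push_cast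
  field_simp
  ring

lemma aux_summable1 (x : ℝ) : Summable (fun n : ℕ => (n : ℝ) * (x ^ n / n.factorial)) := by
  refine (summable_nat_add_iff 1).mp ?_
  exact ((Real.summable_pow_div_factorial x).mul_left x).congr fun n => (aux_shift1 x n).symm

lemma aux_tsum1 (x : ℝ) : ∑' n : ℕ, (n : ℝ) * (x ^ n / n.factorial) = x * Real.exp x := by
  rw [Summable.tsum_eq_zero_add (aux_summable1 x)]
  simp only [Nat.cast_zero, zero_mul, zero_add]
  rw [tsum_congr (fun n => aux_shift1 x n), tsum_mul_left, aux_exp_tsum]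

lemma aux_shift2 (x : ℝ) (n : ℕ) :
    ((n + 2 : ℕ) : ℝ) * (((n + 2 : ℕ) : ℝ) - 1) * (x ^ (n + 2) / (n + 2).factorial)
      = x ^ 2 * (x ^ n / n.factorial) := by
  have h0 : ((n.factorial : ℝ)) ≠ 0 := Nat.cast_ne_zero.2 n.factorial_ne_zero
  have h1 : ((n : ℝ) + 1) ≠ 0 := by positivity
  have h2 : ((n : ℝ) + 2) ≠ 0 := by positivity
  have : (n + 2).factorial = (n + 2) * ((n + 1) * n.factorial) := by
    rw [show n + 2 = (n + 1) + 1 from rfl, Nat.factorial_succ, Nat.factorial_succ]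
  rw [this]
  push_cast
  field_simp
  ring

lemma aux_summable2 (x : ℝ) :
    Summable (fun n : ℕ => (n : ℝ) * ((n : ℝ) - 1) * (x ^ n / n.factorial)) := by
  refine (summable_nat_add_iff 2).mp ?_
  exact ((Real.summable_pow_div_factorial x).mul_left (x ^ 2)).congr
    fun n => (aux_shift2 x n).symm

lemma aux_tsum2 (x : ℝ) :
    ∑' n : ℕ, (n : ℝ) * ((n : ℝ) - 1) * (x ^ n / n.factorial) = x ^ 2 * Real.exp x := by
  rw [Summable.tsum_eq_zero_add (aux_summable2 x)]
  have hs : Summable (fun n : ℕ =>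
      ((n + 1 : ℕ) : ℝ) * (((n + 1 : ℕ) : ℝ) - 1) * (x ^ (n + 1) / (n + 1).factorial)) :=
    (summable_nat_add_iff 1).mpr (aux_summable2 x)
  rw [Summable.tsum_eq_zero_add hs]
  simp only [Nat.cast_zero, Nat.cast_one, zero_mul, mul_zero, sub_self, zero_add,
    Nat.cast_ofNat, Nat.cast_add]
  have : ∀ n : ℕ, ((n : ℝ) + 1 + 1) * ((n : ℝ) + 1 + 1 - 1)
      * (x ^ (n + 1 + 1) / ((n + 1 + 1).factorial : ℝ)) = x ^ 2 * (x ^ n / n.factorial) := by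
    intro n
    have h := aux_shift2 x n
    push_cast at h
    convert h using 2
    ring
  rw [tsum_congr this, tsum_mul_left, aux_exp_tsum]


lemma aux_var_eq (x : ℝ) (n : ℕ) : ((n : ℝ) - x) ^ 2 * (x ^ n / n.factorial)
    = (n : ℝ) * ((n : ℝ) - 1) * (x ^ n / n.factorial)
      + (1 - 2 * x) * ((n : ℝ) * (x ^ n / n.factorial))
      + x ^ 2 * (x ^ n / n.factorial) := by ring

lemma aux_summable_var (x : ℝ) :
    Summable (fun n : ℕ => ((n : ℝ) - x) ^ 2 * (x ^ n / n.factorial)) := by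
  refine (((aux_summable2 x).add ((aux_summable1 x).mul_left (1 - 2 * x))).add
    ((Real.summable_pow_div_factorial x).mul_left (x ^ 2))).congr fun n => ?_
  exact (aux_var_eq x n).symm

lemma aux_tsum_var (x : ℝ) :
    ∑' n : ℕ, ((n : ℝ) - x) ^ 2 * (x ^ n / n.factorial) = x * Real.exp x := by
  rw [tsum_congr (aux_var_eq x),
    Summable.tsum_add ((aux_summable2 x).add ((aux_summable1 x).mul_left (1 - 2 * x)))
      ((Real.summable_pow_div_factorial x).mul_left (x ^ 2)),
    Summable.tsum_add (aux_summable2 x) ((aux_summable1 x).mul_left (1 - 2 * x)),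
    aux_tsum2, tsum_mul_left, aux_tsum1, tsum_mul_left, aux_exp_tsum]
  ring

set_option maxHeartbeats 1000000 in
/-- **Poissonization preserves `C/log` asymptotics.** If `0 ≤ f_n ≤ 1` and
`|f_n - C/log n| ≤ K·(log log n)/(log n)²` for `n ≥ n₀`, then the
Poissonization `G(x) = e^{-x} Σ_n f_n x^n/n!` satisfies
`|G(x) - C/log x| ≤ K'·(log log x)/(log x)²` for large `x`. -/
theorem poissonization_log_asymptotics
    (f : ℕ → ℝ) (hf : ∀ n, f n ∈ Set.Icc (0 : ℝ) 1)
    (C K : ℝ) (hC : 0 < C) (hK : 0 < K)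
    (n₀ : ℕ) (hn₀ : 3 ≤ n₀)
    (hasymp : ∀ n : ℕ, n₀ ≤ n →
      |f n - C / Real.log n| ≤ K * Real.log (Real.log n) / (Real.log n) ^ 2)
    (G : ℝ → ℝ)
    (hG : ∀ x : ℝ, G x =
      Real.exp (-x) * ∑' n : ℕ, f n * x ^ n / (Nat.factorial n)) :
    ∃ K' : ℝ, 0 < K' ∧ ∃ x₀ : ℝ, ∀ x : ℝ, x₀ ≤ x →
      |G x - C / Real.log x| ≤ K' * Real.log (Real.log x) / (Real.log x) ^ 2 := by
  -- eventual polynomial bound on (log x)²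
  have hC4 : (0:ℝ) < 4 * (1 + C) := by linarith
  have hlo : ∀ᶠ y : ℝ in atTop, (Real.log y) ^ 2 ≤ y / (4 * (1 + C)) := by
    have h := (isLittleO_log_rpow_rpow_atTop (2:ℝ) one_pos).def
      (show (0:ℝ) < (4 * (1 + C))⁻¹ by positivity)
    filter_upwards [h, eventually_ge_atTop (0:ℝ)] with y hy hy0
    rw [Real.norm_eq_abs, Real.norm_eq_abs, Real.rpow_one] at hy
    have h2 : Real.log y ^ (2:ℝ) = (Real.log y) ^ 2 := by
      rw [show ((2:ℝ)) = ((2:ℕ):ℝ) by norm_num, Real.rpow_natCast]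
    calc (Real.log y) ^ 2 = Real.log y ^ (2:ℝ) := h2.symm
      _ ≤ |Real.log y ^ (2:ℝ)| := le_abs_self _
      _ ≤ (4 * (1 + C))⁻¹ * |y| := hy
      _ = y / (4 * (1 + C)) := by rw [abs_of_nonneg hy0]; ring
  obtain ⟨x₁, hx₁⟩ := eventually_atTop.mp hlo
  refine ⟨8 * K + 2 * C + 1, by linarith, max (max x₁ (Real.exp (Real.exp 1))) (2 * n₀), ?_⟩
  intro x hxx
  -- basic facts about x
  have hxe : Real.exp (Real.exp 1) ≤ x :=
    le_trans (le_max_right _ _) (le_trans (le_max_left _ _) hxx)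
  have hx2n : (2 * n₀ : ℝ) ≤ x := le_trans (le_max_right _ _) hxx
  have hx1 : (Real.log x) ^ 2 ≤ x / (4 * (1 + C)) :=
    hx₁ x (le_trans (le_trans (le_max_left _ _) (le_max_left _ _)) hxx)
  have hx0 : (0:ℝ) < x := lt_of_lt_of_le (Real.exp_pos _) hxe
  have hlx : Real.exp 1 ≤ Real.log x := by
    rw [Real.le_log_iff_exp_le hx0]; exact hxe
  have he2 : (2:ℝ) ≤ Real.exp 1 := by
    have := Real.exp_one_gt_d9; linarith
  have hlx2 : (2:ℝ) ≤ Real.log x := le_trans he2 hlx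
  have hlxpos : (0:ℝ) < Real.log x := by linarith
  have hx2 : (2:ℝ) ≤ x := by
    have h1 : Real.exp 1 ≤ Real.exp (Real.exp 1) := Real.exp_le_exp.mpr (by linarith)
    linarith
  have hllx : (1:ℝ) ≤ Real.log (Real.log x) := by
    calc (1:ℝ) = Real.log (Real.exp 1) := (Real.log_exp 1).symm
      _ ≤ Real.log (Real.log x) := Real.log_le_log (Real.exp_pos 1) hlx
  -- notation
  set c : ℝ := C / Real.log x with hc_def
  have hcpos : 0 < c := div_pos hC hlxpos
  have hcC : c ≤ C := by
    rw [hc_def, div_le_iff₀ hlxpos]; nlinarith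
  set q : ℕ → ℝ := fun n => x ^ n / n.factorial with hq_def
  set p : ℕ → ℝ := fun n => Real.exp (-x) * q n with hp_def
  have hq : Summable q := Real.summable_pow_div_factorial x
  have hqpos : ∀ n, 0 ≤ q n := fun n => by
    simp only [hq_def]; positivity
  have hp : Summable p := hq.mul_left _
  have hppos : ∀ n, 0 ≤ p n := fun n => mul_nonneg (Real.exp_pos _).le (hqpos n)
  have htsump : ∑' n, p n = 1 := by
    simp only [hp_def, hq_def]
    rw [tsum_mul_left, aux_exp_tsum, ← Real.exp_add]; simp
  have hpf : Summable (fun n => p n * f n) := by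
    apply Summable.of_nonneg_of_le (fun n => mul_nonneg (hppos n) (hf n).1)
      (fun n => ?_) hp
    calc p n * f n ≤ p n * 1 := mul_le_mul_of_nonneg_left (hf n).2 (hppos n)
      _ = p n := mul_one _
  have hGx : G x = ∑' n, p n * f n := by
    rw [hG x, ← tsum_mul_left]
    refine tsum_congr fun n => ?_
    simp only [hp_def, hq_def]; ring
  -- the difference as a tsum
  have hdiff : G x - c = ∑' n, (p n * f n - c * p n) := by
    have h2 : ∑' n, c * p n = c := by rw [tsum_mul_left, htsump, mul_one]
    rw [Summable.tsum_sub hpf (hp.mul_left c), h2, hGx]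
  set g : ℕ → ℝ := fun n => p n * |f n - c| with hg_def
  have hfc : ∀ n, |f n - c| ≤ 1 + C := by
    intro n
    have h1 := (hf n).1; have h2 := (hf n).2
    rw [abs_le]; constructor <;> nlinarith
  have hgpos : ∀ n, 0 ≤ g n := fun n => mul_nonneg (hppos n) (abs_nonneg _)
  have hgsum : Summable g := by
    apply Summable.of_nonneg_of_le hgpos (fun n => ?_) (hp.mul_right (1 + C))
    exact mul_le_mul_of_nonneg_left (hfc n) (hppos n)
  have habs : |G x - c| ≤ ∑' n, g n := by
    rw [hdiff]
    have hnorm : Summable (fun n => ‖p n * f n - c * p n‖) := by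
      refine hgsum.congr fun n => ?_
      simp only [hg_def, Real.norm_eq_abs]
      rw [show p n * f n - c * p n = p n * (f n - c) by ring, abs_mul,
        abs_of_nonneg (hppos n)]
    calc |∑' n, (p n * f n - c * p n)| ≤ ∑' n, ‖p n * f n - c * p n‖ := by
          rw [← Real.norm_eq_abs]; exact norm_tsum_le_tsum_norm hnorm
      _ = ∑' n, g n := by
          refine tsum_congr fun n => ?_
          simp only [hg_def, Real.norm_eq_abs]
          rw [show p n * f n - c * p n = p n * (f n - c) by ring, abs_mul,
            abs_of_nonneg (hppos n)]
  -- split into window and tail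
  set s : Set ℕ := {n : ℕ | |(n:ℝ) - x| ≤ x / 2} with hs_def
  have hsplit : ∑' n, g n = (∑' n : s, g n) + ∑' n : ↥sᶜ, g n :=
    (Summable.tsum_add_tsum_compl (hgsum.subtype s) (hgsum.subtype sᶜ)).symm
  set B : ℝ := ((8 * K + 2 * C) * Real.log (Real.log x)) / (Real.log x) ^ 2 with hB_def
  have hB0 : 0 ≤ B := by
    apply div_nonneg _ (sq_nonneg _)
    apply mul_nonneg (by linarith) (by linarith)
  -- window pointwise bound
  have hwB : ∀ n : ℕ, n ∈ s → g n ≤ p n * B := by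
    intro n hns
    simp only [hs_def, Set.mem_setOf_eq, abs_le] at hns
    have hn_lb : x / 2 ≤ (n:ℝ) := by linarith [hns.1]
    have hn_ub : (n:ℝ) ≤ 3 * x / 2 := by linarith [hns.2]
    have hnpos : (0:ℝ) < n := lt_of_lt_of_le (by linarith) hn_lb
    have hn₀n : n₀ ≤ n := by
      have : (n₀:ℝ) ≤ (n:ℝ) := by linarith
      exact_mod_cast this
    have hlog2 : Real.log 2 ≤ 1 := by
      have := Real.log_le_sub_one_of_pos (show (0:ℝ) < 2 by norm_num); linarith
    have hlogn_lb : 1 / 2 * Real.log x ≤ Real.log n := by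
      have h1 : Real.log (x / 2) ≤ Real.log n := Real.log_le_log (by linarith) hn_lb
      rw [Real.log_div (by linarith) (by norm_num)] at h1
      linarith
    have hlogn1 : (1:ℝ) ≤ Real.log n := by linarith
    have hlogn_pos : (0:ℝ) < Real.log n := by linarith
    have hlogn_ub : Real.log n ≤ 2 * Real.log x := by
      have h1 : (n:ℝ) ≤ x ^ 2 := by nlinarith [hx2, hn_ub]
      have h2 : Real.log n ≤ Real.log (x ^ 2) := Real.log_le_log hnpos h1
      rw [Real.log_pow] at h2; push_cast at h2; linarith
    have hlln : Real.log (Real.log n) ≤ 2 * Real.log (Real.log x) := by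
      have h1 : Real.log (Real.log n) ≤ Real.log (2 * Real.log x) :=
        Real.log_le_log hlogn_pos hlogn_ub
      rw [Real.log_mul (by norm_num) (ne_of_gt hlxpos)] at h1
      linarith
    have hlln0 : 0 ≤ Real.log (Real.log n) := Real.log_nonneg hlogn1
    -- term 1
    have t1 : |f n - C / Real.log n| ≤ K * Real.log (Real.log n) / (Real.log n) ^ 2 :=
      hasymp n hn₀n
    have t1b : K * Real.log (Real.log n) / (Real.log n) ^ 2
        ≤ 8 * K * Real.log (Real.log x) / (Real.log x) ^ 2 := by
      have hnum : K * Real.log (Real.log n) ≤ K * (2 * Real.log (Real.log x)) :=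
        mul_le_mul_of_nonneg_left hlln hK.le
      have hden : (1 / 2 * Real.log x) ^ 2 ≤ (Real.log n) ^ 2 := by
        apply pow_le_pow_left₀ (by linarith) hlogn_lb
      calc K * Real.log (Real.log n) / (Real.log n) ^ 2
          ≤ K * (2 * Real.log (Real.log x)) / ((1 / 2 * Real.log x) ^ 2) :=
            div_le_div₀ (mul_nonneg hK.le (by linarith)) hnum (by positivity) hden
        _ = 8 * K * Real.log (Real.log x) / (Real.log x) ^ 2 := by
            field_simp; ring
    -- term 2
    have hlogclose : |Real.log x - Real.log n| ≤ 1 := by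
      have htd : Real.log n - Real.log x = Real.log ((n:ℝ) / x) :=
        (Real.log_div (ne_of_gt hnpos) (ne_of_gt hx0)).symm
      set t : ℝ := (n:ℝ) / x with ht_def
      have ht1 : 1 / 2 ≤ t := by
        rw [ht_def, le_div_iff₀ hx0]; linarith
      have ht2 : t ≤ 3 / 2 := by
        rw [ht_def, div_le_iff₀ hx0]; linarith
      have htpos : 0 < t := by linarith
      have hup : Real.log t ≤ 1 / 2 := by
        have := Real.log_le_sub_one_of_pos htpos; linarith
      have hdown : -Real.log t ≤ 1 := by
        have h1 : Real.log t⁻¹ ≤ t⁻¹ - 1 := Real.log_le_sub_one_of_pos (by positivity)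
        have h2 : t⁻¹ ≤ 2 := by
          rw [inv_le_comm₀ (by linarith) (by norm_num)]; linarith
        rw [Real.log_inv] at h1
        linarith
      rw [abs_sub_comm, abs_le]
      constructor <;> [skip; skip] <;> rw [htd] <;> linarith
    have t2 : |C / Real.log n - C / Real.log x|
        ≤ 2 * C * Real.log (Real.log x) / (Real.log x) ^ 2 := by
      have heq : C / Real.log n - C / Real.log x
          = C * (Real.log x - Real.log n) / (Real.log n * Real.log x) := by
        field_simp
      rw [heq, abs_div, abs_mul, abs_of_pos hC,
        abs_of_pos (mul_pos hlogn_pos hlxpos)]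
      calc C * |Real.log x - Real.log n| / (Real.log n * Real.log x)
          ≤ C * 1 / (1 / 2 * Real.log x * Real.log x) := by
            apply div_le_div₀ (by linarith)
              (mul_le_mul_of_nonneg_left hlogclose hC.le) (by positivity)
            apply mul_le_mul_of_nonneg_right hlogn_lb hlxpos.le
        _ = 2 * C / (Real.log x) ^ 2 := by field_simp
        _ ≤ 2 * C * Real.log (Real.log x) / (Real.log x) ^ 2 := by
            apply div_le_div_of_nonneg_right ?_ (by positivity)
            nlinarith
    -- combine
    have hcomb : |f n - c| ≤ B := by
      rw [hc_def]
      calc |f n - C / Real.log x|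
          ≤ |f n - C / Real.log n| + |C / Real.log n - C / Real.log x| := by
            have := abs_sub_abs_le_abs_sub (f n - C / Real.log n) 0
            calc |f n - C / Real.log x|
                = |(f n - C / Real.log n) + (C / Real.log n - C / Real.log x)| := by
                  ring_nf
              _ ≤ _ := abs_add_le _ _
        _ ≤ 8 * K * Real.log (Real.log x) / (Real.log x) ^ 2
            + 2 * C * Real.log (Real.log x) / (Real.log x) ^ 2 :=
            add_le_add (le_trans t1 t1b) t2
        _ = B := by rw [hB_def]; ring
    simp only [hg_def]
    exact mul_le_mul_of_nonneg_left hcomb (hppos n)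
  have hwin : (∑' n : s, g n) ≤ B := by
    calc (∑' n : s, g n) ≤ ∑' n : s, p n * B := by
          refine Summable.tsum_le_tsum (fun i => hwB i.1 i.2) (hgsum.subtype s) ?_
          exact (hp.mul_right B).subtype s
      _ = (∑' n : s, p n) * B := tsum_mul_right
      _ ≤ 1 * B := mul_le_mul_of_nonneg_right
          (le_trans (Summable.tsum_subtype_le p s hppos hp) (le_of_eq htsump)) hB0
      _ = B := one_mul B
  -- tail
  set v : ℕ → ℝ := fun n => ((n:ℝ) - x) ^ 2 * q n with hv_def
  have hv : Summable v := aux_summable_var x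
  have hvpos : ∀ n, 0 ≤ v n := fun n => mul_nonneg (sq_nonneg _) (hqpos n)
  set D : ℝ := (1 + C) * Real.exp (-x) * (4 / x ^ 2) with hD_def
  have hD0 : 0 ≤ D := by positivity
  have htail1 : (∑' n : ↥sᶜ, g n) ≤ 4 * (1 + C) / x := by
    have hpt : ∀ i : ↥sᶜ, g i ≤ D * v i := by
      intro ⟨n, hn⟩
      simp only [hs_def, Set.mem_compl_iff, Set.mem_setOf_eq, not_le] at hn
      have h1 : (x / 2) ^ 2 ≤ ((n:ℝ) - x) ^ 2 := by
        calc (x / 2) ^ 2 ≤ |(n:ℝ) - x| ^ 2 := by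
              apply pow_le_pow_left₀ (by linarith) hn.le
          _ = ((n:ℝ) - x) ^ 2 := sq_abs _
      have h2 : q n ≤ 4 / x ^ 2 * (((n:ℝ) - x) ^ 2 * q n) := by
        have h3 : 1 ≤ 4 / x ^ 2 * ((n:ℝ) - x) ^ 2 := by
          rw [div_mul_eq_mul_div, le_div_iff₀ (by positivity)]
          nlinarith
        nlinarith [hqpos n]
      show g n ≤ D * v n
      calc g n = p n * |f n - c| := rfl
        _ ≤ p n * (1 + C) := mul_le_mul_of_nonneg_left (hfc n) (hppos n)
        _ = (1 + C) * Real.exp (-x) * q n := by rw [hp_def]; ring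
        _ ≤ (1 + C) * Real.exp (-x) * (4 / x ^ 2 * (((n:ℝ) - x) ^ 2 * q n)) := by
            apply mul_le_mul_of_nonneg_left h2 (by positivity)
        _ = D * v n := by rw [hD_def, hv_def]; ring
    calc (∑' n : ↥sᶜ, g n) ≤ ∑' n : ↥sᶜ, D * v n :=
          Summable.tsum_le_tsum hpt (hgsum.subtype _) ((hv.mul_left D).subtype _)
      _ = D * ∑' n : ↥sᶜ, v n := tsum_mul_left
      _ ≤ D * ∑' n, v n := mul_le_mul_of_nonneg_left
          (Summable.tsum_subtype_le v _ hvpos hv) hD0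
      _ = D * (x * Real.exp x) := by rw [hv_def, hq_def, aux_tsum_var x]
      _ = 4 * (1 + C) / x := by
          rw [hD_def, Real.exp_neg]
          field_simp
  have htail2 : 4 * (1 + C) / x ≤ Real.log (Real.log x) / (Real.log x) ^ 2 := by
    have h1 : 4 * (1 + C) / x ≤ 1 / (Real.log x) ^ 2 := by
      rw [div_le_div_iff₀ hx0 (by positivity)]
      rw [le_div_iff₀ hC4] at hx1
      nlinarith
    calc 4 * (1 + C) / x ≤ 1 / (Real.log x) ^ 2 := h1
      _ ≤ Real.log (Real.log x) / (Real.log x) ^ 2 := by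
          apply div_le_div_of_nonneg_right hllx (by positivity)
  -- conclusion
  calc |G x - C / Real.log x| = |G x - c| := by rw [hc_def]
    _ ≤ ∑' n, g n := habs
    _ = (∑' n : s, g n) + ∑' n : ↥sᶜ, g n := hsplit
    _ ≤ B + Real.log (Real.log x) / (Real.log x) ^ 2 :=
        add_le_add hwin (le_trans htail1 htail2)
    _ = (8 * K + 2 * C + 1) * Real.log (Real.log x) / (Real.log x) ^ 2 := by
        rw [hB_def]; field_simp
end

section
/- For every real a > 0, σ > 0, x ∈ ℝ and every complex number r, the following Fourier-integral identity holds: e^{−x²/(2aσ²)}·(1 − (i·r/6)·x·(3σ²a − x²)/(σ⁶·a²)) = (σ·√a/√(2π))·∫_{−∞}^{∞} e^{−i·s·x}·e^{−a·σ²·s²/2}·(1 + (r·a/6)·s³) ds, where the integral converges absolutely. -/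
open MeasureTheory Filter Topology

namespace EdgeworthAux

open Complex


noncomputable def f (b : ℝ) (k : ℕ) (x : ℝ) (s : ℝ) : ℂ :=
  (-I * s) ^ k * (Complex.exp ((x : ℂ) * (-I * s)) * Complex.exp (-(b : ℂ) * (s : ℂ) ^ 2))

lemma norm_f (b : ℝ) (k : ℕ) (x s : ℝ) :
    ‖f b k x s‖ = |s| ^ k * Real.exp (-b * s ^ 2) := by
  have h1 : (-(b : ℂ) * (s : ℂ) ^ 2) = ((-b * s ^ 2 : ℝ) : ℂ) := by push_cast; ring
  have h2 : ((x : ℂ) * (-I * s)) = (-(x * s) : ℝ) * I := by push_cast; ring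
  have h3 : ‖(-I * (s : ℂ))‖ = |s| := by
    rw [norm_mul, norm_neg, Complex.norm_I, one_mul, Complex.norm_real, Real.norm_eq_abs]
  unfold f
  rw [h1, h2, norm_mul, norm_mul, norm_pow, h3,
    Complex.norm_exp_ofReal_mul_I, Complex.norm_exp,
    Complex.ofReal_re]
  ring

lemma gauss_bound (b : ℝ) (hb : 0 < b) (n : ℕ) (s : ℝ) :
    |s| ^ n * Real.exp (-b * s ^ 2) ≤
      (1 + n.factorial * (2 / b) ^ n) * Real.exp (-(b / 2) * s ^ 2) := by
  have h1 : |s| ^ n ≤ 1 + (s ^ 2) ^ n := by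
    rcases le_total (|s|) 1 with h | h
    · have h0 : |s| ^ n ≤ 1 := pow_le_one₀ (abs_nonneg s) h
      have : (0:ℝ) ≤ (s ^ 2) ^ n := by positivity
      linarith
    · have h2 : |s| ^ n ≤ (|s| ^ 2) ^ n := by
        rw [← pow_mul]
        exact pow_le_pow_right₀ h (Nat.le_mul_of_pos_left n (by norm_num))
      rw [_root_.sq_abs] at h2
      linarith
  set c : ℝ := (n.factorial : ℝ) * (2 / b) ^ n with hc
  have hcpos : (0:ℝ) ≤ c := by positivity
  have h2 : (s ^ 2) ^ n ≤ c * Real.exp (b / 2 * s ^ 2) := by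
    have hx : (0:ℝ) ≤ b / 2 * s ^ 2 := by positivity
    have h3 := Real.pow_div_factorial_le_exp _ hx n
    have h4 : (s ^ 2) ^ n = c * ((b / 2 * s ^ 2) ^ n / n.factorial) := by
      rw [hc, mul_pow, div_pow, div_pow]
      field_simp
    rw [h4]
    exact mul_le_mul_of_nonneg_left h3 hcpos
  have hEP : Real.exp (-(b / 2) * s ^ 2) * Real.exp (b / 2 * s ^ 2) = 1 := by
    rw [← Real.exp_add]; ring_nf; exact Real.exp_zero
  have hE1 : Real.exp (-(b / 2) * s ^ 2) ≤ 1 := Real.exp_le_one_iff.2 (by nlinarith [sq_nonneg s])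
  have hEE : Real.exp (-b * s ^ 2) = Real.exp (-(b / 2) * s ^ 2) * Real.exp (-(b / 2) * s ^ 2) := by
    rw [← Real.exp_add]; ring_nf
  have hEpos : (0:ℝ) < Real.exp (-(b / 2) * s ^ 2) := Real.exp_pos _
  rw [hEE]
  set E := Real.exp (-(b / 2) * s ^ 2)
  set P := Real.exp (b / 2 * s ^ 2)
  calc |s| ^ n * (E * E) ≤ (1 + (s ^ 2) ^ n) * (E * E) :=
        mul_le_mul_of_nonneg_right h1 (by positivity)
    _ = E * E + (s ^ 2) ^ n * (E * E) := by ring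
    _ ≤ E * E + c * P * (E * E) := by
        have := mul_le_mul_of_nonneg_right h2 (mul_nonneg hEpos.le hEpos.le)
        linarith
    _ = E * E + c * ((E * P) * E) := by ring
    _ = E * E + c * E := by rw [hEP]; ring
    _ ≤ 1 * E + c * E := by nlinarith
    _ = (1 + c) * E := by ring

lemma continuous_f (b : ℝ) (k : ℕ) (x : ℝ) : Continuous (f b k x) := by
  unfold f; fun_prop

lemma integrable_f {b : ℝ} (hb : 0 < b) (k : ℕ) (x : ℝ) : Integrable (f b k x) := by
  refine Integrable.mono'
    (g := fun s => (1 + k.factorial * (2 / b) ^ k) * Real.exp (-(b / 2) * s ^ 2))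
    ((integrable_exp_neg_mul_sq (half_pos hb)).const_mul _)
    (continuous_f b k x).aestronglyMeasurable
    (Filter.Eventually.of_forall fun s => ?_)
  rw [norm_f]
  exact gauss_bound b hb k s

lemma hasDerivAt_innerf (b : ℝ) (k : ℕ) (s : ℝ) (y : ℝ) :
    HasDerivAt (fun y : ℝ => f b k y s) (f b (k + 1) y s) y := by
  have h1 := ((hasDerivAt_id ((y : ℝ) : ℂ)).mul_const (-I * (s:ℂ))).cexp
  simp only [id_eq, one_mul] at h1
  have h2 : HasDerivAt (fun y : ℝ => Complex.exp ((y : ℂ) * (-I * s)))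
      (Complex.exp ((y : ℂ) * (-I * s)) * (-I * s)) y := h1.comp_ofReal
  have h3 := (h2.mul_const (Complex.exp (-(b : ℂ) * (s : ℂ) ^ 2))).const_mul ((-I * (s:ℂ)) ^ k)
  refine h3.congr_deriv ?_
  unfold f
  rw [pow_succ]
  ring

lemma hasDerivAt_intf {b : ℝ} (hb : 0 < b) (k : ℕ) (x : ℝ) :
    HasDerivAt (fun y : ℝ => ∫ s : ℝ, f b k y s) (∫ s : ℝ, f b (k + 1) x s) x := by
  have := hasDerivAt_integral_of_dominated_loc_of_deriv_le
    (F := fun (y : ℝ) (s : ℝ) => f b k y s)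
    (F' := fun (y : ℝ) (s : ℝ) => f b (k + 1) y s)
    (bound := fun s => (1 + (k + 1).factorial * (2 / b) ^ (k + 1)) * Real.exp (-(b / 2) * s ^ 2))
    (x₀ := x) (Metric.ball_mem_nhds x zero_lt_one)
    (Filter.Eventually.of_forall fun y => (continuous_f b k y).aestronglyMeasurable)
    (integrable_f hb k x)
    (integrable_f hb (k + 1) x).aestronglyMeasurable
    (Filter.Eventually.of_forall fun s y _ => by
      rw [norm_f]; exact gauss_bound b hb (k + 1) s)
    ((integrable_exp_neg_mul_sq (half_pos hb)).const_mul _)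
    (Filter.Eventually.of_forall fun s y _ => hasDerivAt_innerf b k s y)
  exact this.2

noncomputable def K (b : ℝ) : ℂ := (↑Real.pi / (b : ℂ)) ^ (1 / 2 : ℂ)
noncomputable def u (b : ℝ) (x : ℝ) : ℂ := -((x : ℂ) ^ 2 / (4 * b))

noncomputable def g : ℕ → ℝ → ℝ → ℂ
  | 0, b, x => K b * Complex.exp (u b x)
  | 1, b, x => K b * (Complex.exp (u b x) * (-(x : ℂ) / (2 * b)))
  | 2, b, x => K b * (Complex.exp (u b x) * ((x : ℂ) ^ 2 / (4 * (b:ℂ) ^ 2) - 1 / (2 * b)))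
  | _, b, x => K b * (Complex.exp (u b x) *
      (-(x : ℂ) ^ 3 / (8 * (b:ℂ) ^ 3) + 3 * (x : ℂ) / (4 * (b:ℂ) ^ 2)))

lemma hasDerivAt_u (b : ℝ) (x : ℝ) :
    HasDerivAt (fun y : ℝ => u b y) (-(2 * (x:ℂ)) / (4 * b)) x := by
  have h1 : HasDerivAt (fun w : ℂ => -(w ^ 2 / (4 * (b:ℂ)))) (-(2 * (x:ℂ)) / (4 * b)) (x : ℂ) := by
    have h0 := ((hasDerivAt_id ((x:ℝ):ℂ)).pow 2).div_const (4 * (b:ℂ)) |>.neg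
    simp only [id_eq] at h0
    exact h0.congr_deriv (by push_cast; ring)
  exact h1.comp_ofReal

lemma hasDerivAt_ue (b : ℝ) (x : ℝ) :
    HasDerivAt (fun y : ℝ => Complex.exp (u b y))
      (Complex.exp (u b x) * (-(2 * (x:ℂ)) / (4 * b))) x :=
  (hasDerivAt_u b x).cexp

lemma hasDerivAt_g (b : ℝ) (hb : (b:ℂ) ≠ 0) (k : ℕ) (hk : k < 3) (x : ℝ) :
    HasDerivAt (fun y : ℝ => g k b y) (g (k + 1) b x) x := by
  interval_cases k
  · have := (hasDerivAt_ue b x).const_mul (K b)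
    refine this.congr_deriv ?_
    show K b * (Complex.exp (u b x) * (-(2 * (x:ℂ)) / (4 * b))) =
      K b * (Complex.exp (u b x) * (-(x : ℂ) / (2 * b)))
    field_simp [hb]
    ring
  · have hx : HasDerivAt (fun y : ℝ => (-(y : ℂ) / (2 * (b:ℂ)))) (-1 / (2 * b)) x := by
      have h1 : HasDerivAt (fun w : ℂ => -w / (2 * (b:ℂ))) (-1 / (2 * b)) (x : ℂ) := by
        have h0 := ((hasDerivAt_id ((x:ℝ):ℂ)).neg).div_const (2 * (b:ℂ))
        exact h0
      exact h1.comp_ofReal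
    have := ((hasDerivAt_ue b x).mul hx).const_mul (K b)
    refine this.congr_deriv ?_
    show K b * (Complex.exp (u b x) * (-(2 * (x:ℂ)) / (4 * b)) * (-(x : ℂ) / (2 * b)) +
        Complex.exp (u b x) * (-1 / (2 * b))) =
      K b * (Complex.exp (u b x) * ((x : ℂ) ^ 2 / (4 * (b:ℂ) ^ 2) - 1 / (2 * b)))
    field_simp [hb]
    ring
  · have hx : HasDerivAt (fun y : ℝ => ((y : ℂ) ^ 2 / (4 * (b:ℂ) ^ 2) - 1 / (2 * b)))
        (2 * (x:ℂ) / (4 * (b:ℂ) ^ 2)) x := by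
      have h1 : HasDerivAt (fun w : ℂ => w ^ 2 / (4 * (b:ℂ) ^ 2) - 1 / (2 * (b:ℂ)))
          (2 * (x:ℂ) / (4 * (b:ℂ) ^ 2)) (x : ℂ) := by
        have h0 := (((hasDerivAt_id ((x:ℝ):ℂ)).pow 2).div_const (4 * (b:ℂ) ^ 2)).sub_const
          (1 / (2 * (b:ℂ)))
        simp only [id_eq] at h0
        exact h0.congr_deriv (by push_cast; ring)
      exact h1.comp_ofReal
    have := ((hasDerivAt_ue b x).mul hx).const_mul (K b)
    refine this.congr_deriv ?_
    show K b * (Complex.exp (u b x) * (-(2 * (x:ℂ)) / (4 * b)) *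
          ((x : ℂ) ^ 2 / (4 * (b:ℂ) ^ 2) - 1 / (2 * b)) +
        Complex.exp (u b x) * (2 * (x:ℂ) / (4 * (b:ℂ) ^ 2))) =
      K b * (Complex.exp (u b x) *
        (-(x : ℂ) ^ 3 / (8 * (b:ℂ) ^ 3) + 3 * (x : ℂ) / (4 * (b:ℂ) ^ 2)))
    field_simp [hb]
    ring_nf

lemma f0_eq {b : ℝ} (hb : 0 < b) (x : ℝ) : (∫ s : ℝ, f b 0 x s) = g 0 b x := by
  have h := fourierIntegral_gaussian (b := (b : ℂ)) (by simpa using hb) (-(x : ℂ))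
  have h2 : (fun s : ℝ => f b 0 x s) =
      fun s : ℝ => Complex.exp (I * (-(x:ℂ)) * s) * Complex.exp (-(b:ℂ) * (s:ℂ) ^ 2) := by
    funext s
    unfold f
    rw [pow_zero, one_mul, show ((x:ℂ) * (-I * s)) = I * (-(x:ℂ)) * s from by ring]
  show (∫ s : ℝ, f b 0 x s) = _
  rw [show (∫ s : ℝ, f b 0 x s) = ∫ s : ℝ,
      Complex.exp (I * (-(x:ℂ)) * s) * Complex.exp (-(b:ℂ) * (s:ℂ) ^ 2) from by rw [h2], h]
  unfold g K u
  rw [neg_sq, neg_div]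
  rfl

lemma fk_eq {b : ℝ} (hb : 0 < b) (k : ℕ) (hk : k ≤ 3) (x : ℝ) :
    (∫ s : ℝ, f b k x s) = g k b x := by
  have hbC : ((b : ℂ)) ≠ 0 := by exact_mod_cast hb.ne'
  have step : ∀ n : ℕ, n < 3 → (∀ y : ℝ, (∫ s : ℝ, f b n y s) = g n b y) →
      ∀ y : ℝ, (∫ s : ℝ, f b (n + 1) y s) = g (n + 1) b y := by
    intro n hn3 ih y
    have h1 : HasDerivAt (fun t : ℝ => g n b t) (∫ s : ℝ, f b (n + 1) y s) y := by
      have := hasDerivAt_intf hb n y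
      rwa [show (fun t : ℝ => ∫ s : ℝ, f b n t s) = fun t => g n b t from funext ih] at this
    exact h1.unique (hasDerivAt_g b hbC n hn3 y)
  have e0 : ∀ y : ℝ, (∫ s : ℝ, f b 0 y s) = g 0 b y := f0_eq hb
  have e1 := step 0 (by norm_num) e0
  have e2 := step 1 (by norm_num) e1
  have e3 := step 2 (by norm_num) e2
  interval_cases k
  · exact e0 x
  · exact e1 x
  · exact e2 x
  · exact e3 x


end EdgeworthAux

open EdgeworthAux Complex in
/-- **Edgeworth-type Fourier inversion identity.** For `a, σ > 0`, `x ∈ ℝ` and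
`r ∈ ℂ`, the Gaussian density with cubic correction equals the corresponding
inverse Fourier integral, and the integrand is (absolutely) integrable. -/
theorem edgeworth_fourier_identity
    (a σ x : ℝ) (ha : 0 < a) (hσ : 0 < σ) (r : ℂ) :
    Integrable (fun s : ℝ =>
        Complex.exp (-Complex.I * s * x) *
          Complex.exp (-((a : ℂ) * (σ : ℂ) ^ 2 * (s : ℂ) ^ 2) / 2) *
          (1 + (r * (a : ℂ) / 6) * (s : ℂ) ^ 3)) ∧
    Complex.exp (-((x : ℂ) ^ 2) / (2 * (a : ℂ) * (σ : ℂ) ^ 2)) *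
        (1 - (Complex.I * r / 6) * (x : ℂ) *
          (3 * (σ : ℂ) ^ 2 * (a : ℂ) - (x : ℂ) ^ 2) / ((σ : ℂ) ^ 6 * (a : ℂ) ^ 2)) =
      ((σ * Real.sqrt a / Real.sqrt (2 * Real.pi) : ℝ) : ℂ) *
        ∫ s : ℝ, Complex.exp (-Complex.I * s * x) *
          Complex.exp (-((a : ℂ) * (σ : ℂ) ^ 2 * (s : ℂ) ^ 2) / 2) *
          (1 + (r * (a : ℂ) / 6) * (s : ℂ) ^ 3) := by
  
  set b : ℝ := a * σ ^ 2 / 2 with hb_def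
  have hb : 0 < b := by positivity
  have haC : ((a : ℂ)) ≠ 0 := by exact_mod_cast ha.ne'
  have hσC : ((σ : ℂ)) ≠ 0 := by exact_mod_cast hσ.ne'
  have hbC : ((b : ℂ)) ≠ 0 := by exact_mod_cast hb.ne'
  set c : ℂ := r * (a : ℂ) / 6 with hc_def
  have h_int : (fun s : ℝ =>
      Complex.exp (-Complex.I * s * x) *
        Complex.exp (-((a : ℂ) * (σ : ℂ) ^ 2 * (s : ℂ) ^ 2) / 2) *
        (1 + c * (s : ℂ) ^ 3)) =
      fun s : ℝ => f b 0 x s + (-I * c) * f b 3 x s := by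
    funext s
    have e1 : Complex.exp (-Complex.I * s * x) = Complex.exp ((x : ℂ) * (-I * s)) :=
      congrArg Complex.exp (by ring)
    have e2 : Complex.exp (-((a : ℂ) * (σ : ℂ) ^ 2 * (s : ℂ) ^ 2) / 2) =
        Complex.exp (-(b : ℂ) * (s : ℂ) ^ 2) :=
      congrArg Complex.exp (by rw [hb_def]; push_cast; ring)
    rw [e1, e2]
    unfold f
    rw [show (-I * (s:ℂ)) ^ 3 = I * (s:ℂ) ^ 3 from by
      rw [mul_pow]; norm_num [pow_succ, Complex.I_mul_I]]
    linear_combination ((s : ℂ) ^ 3 * c * Complex.exp ((x : ℂ) * (-I * s)) *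
      Complex.exp (-(b : ℂ) * (s : ℂ) ^ 2)) * Complex.I_mul_I
  constructor
  · rw [h_int]
    exact (integrable_f hb 0 x).add ((integrable_f hb 3 x).const_mul _)
  rw [h_int, integral_add (integrable_f hb 0 x) ((integrable_f hb 3 x).const_mul _),
    integral_const_mul, fk_eq hb 0 (by norm_num) x, fk_eq hb 3 le_rfl x]
  show _ = _ * (K b * Complex.exp (u b x) + -I * c * (K b * (Complex.exp (u b x) *
      (-(x : ℂ) ^ 3 / (8 * (b:ℂ) ^ 3) + 3 * (x : ℂ) / (4 * (b:ℂ) ^ 2)))))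
  have hKval : ((σ * Real.sqrt a / Real.sqrt (2 * Real.pi) : ℝ) : ℂ) * K b = 1 := by
    have h1 : K b = ((Real.sqrt (Real.pi / b) : ℝ) : ℂ) := by
      unfold K
      rw [show ((Real.pi : ℂ) / (b : ℂ)) = ((Real.pi / b : ℝ) : ℂ) from by push_cast; ring,
        show ((1 / 2 : ℂ)) = ((1 / 2 : ℝ) : ℂ) from by norm_num,
        ← Complex.ofReal_cpow (by positivity), Real.sqrt_eq_rpow]
    rw [h1, ← Complex.ofReal_mul]
    have h2 : (σ * Real.sqrt a / Real.sqrt (2 * Real.pi)) * Real.sqrt (Real.pi / b) = 1 := by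
      have h3 : Real.pi / b = 2 * Real.pi / (a * σ ^ 2) := by
        rw [hb_def]; field_simp
      have h2π : Real.sqrt (2 * Real.pi) ≠ 0 := ne_of_gt (Real.sqrt_pos.2 (by positivity))
      have hsa : Real.sqrt a ≠ 0 := ne_of_gt (Real.sqrt_pos.2 ha)
      rw [h3, Real.sqrt_div (by positivity) (a * σ ^ 2), Real.sqrt_mul ha.le,
        Real.sqrt_sq hσ.le]
      field_simp
    rw [h2]; norm_num
  have hu : Complex.exp (u b x) =
      Complex.exp (-((x : ℂ) ^ 2) / (2 * (a : ℂ) * (σ : ℂ) ^ 2)) := by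
    refine congrArg Complex.exp ?_
    unfold u
    rw [hb_def]
    push_cast
    field_simp
    ring
  have hbr : (1 - (Complex.I * r / 6) * (x : ℂ) *
        (3 * (σ : ℂ) ^ 2 * (a : ℂ) - (x : ℂ) ^ 2) / ((σ : ℂ) ^ 6 * (a : ℂ) ^ 2)) =
      1 + (-I * c) * (-(x : ℂ) ^ 3 / (8 * (b:ℂ) ^ 3) + 3 * (x : ℂ) / (4 * (b:ℂ) ^ 2)) := by
    rw [hc_def, hb_def]
    push_cast
    field_simp
    ring_nf
  calc Complex.exp (-((x : ℂ) ^ 2) / (2 * (a : ℂ) * (σ : ℂ) ^ 2)) *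
        (1 - (Complex.I * r / 6) * (x : ℂ) *
          (3 * (σ : ℂ) ^ 2 * (a : ℂ) - (x : ℂ) ^ 2) / ((σ : ℂ) ^ 6 * (a : ℂ) ^ 2))
      = Complex.exp (u b x) * (1 + (-I * c) * (-(x : ℂ) ^ 3 / (8 * (b:ℂ) ^ 3) +
          3 * (x : ℂ) / (4 * (b:ℂ) ^ 2))) := by rw [hu, hbr]
    _ = (((σ * Real.sqrt a / Real.sqrt (2 * Real.pi) : ℝ) : ℂ) * K b) *
          (Complex.exp (u b x) * (1 + (-I * c) * (-(x : ℂ) ^ 3 / (8 * (b:ℂ) ^ 3) +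
          3 * (x : ℂ) / (4 * (b:ℂ) ^ 2)))) := by rw [hKval, one_mul]
    _ = _ := by ring
end

section
/- Let a ∈ ℝ, b ∈ ℂ, and let ε : (0,∞) → ℂ satisfy t^{3/2}·ε(t) → 0 as t → ∞. Then, denoting by z^t = exp(t·Log z) the principal-branch complex power (defined for t large enough that 1 + a/t + b·t^{−3/2} + ε(t) lies in the right half-plane), one has √t · ( (1 + a/t + b·t^{−3/2} + ε(t))^t − e^a·(1 + b·t^{−1/2}) ) → 0 as t → ∞; equivalently, (1 + a/t + b·t^{−3/2} + o(t^{−3/2}))^t = e^a·(1 + b·t^{−1/2} + o(t^{−1/2})). -/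
open Filter Topology

/-- **Asymptotics of complex powers with a cubic-order correction.** If
`ε(t) = o(t^{-3/2})`, then
`(1 + a/t + b·t^{-3/2} + ε(t))^t = e^a·(1 + b·t^{-1/2} + o(t^{-1/2}))`
as `t → ∞`, where `z^t = exp(t·Log z)` is the principal-branch power. -/
theorem cpow_one_add_asymptotics
    (a : ℝ) (b : ℂ) (ε : ℝ → ℂ)
    (hε : Tendsto (fun t : ℝ => ((t ^ ((3 : ℝ) / 2) : ℝ) : ℂ) * ε t)
      atTop (𝓝 0)) :
    Tendsto (fun t : ℝ =>
        Real.sqrt t *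
          ‖
            ((1 + (a : ℂ) / (t : ℂ) + b * ((t ^ (-(3 : ℝ) / 2) : ℝ) : ℂ) + ε t) ^ (t : ℂ) -
              Real.exp a * (1 + b / ((Real.sqrt t : ℝ) : ℂ)))‖)
      atTop (𝓝 0) := by
  set w : ℝ → ℂ := fun t => (a : ℂ) / t + b * ((t ^ (-(3:ℝ)/2) : ℝ) : ℂ) + ε t with hwdef
  set u : ℝ → ℂ := fun t => (t : ℂ) * Complex.log (1 + w t) - a with hudef
  set C : ℝ := |a| + ‖b‖ + 1 with hCdef
  -- basic limits
  have h32 : Tendsto (fun t : ℝ => t ^ (-(3:ℝ)/2)) atTop (𝓝 0) := by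
    simpa [neg_div] using tendsto_rpow_neg_atTop (by norm_num : (0:ℝ) < 3/2)
  have h12 : Tendsto (fun t : ℝ => t ^ (-(1:ℝ)/2)) atTop (𝓝 0) := by
    simpa [neg_div] using tendsto_rpow_neg_atTop (by norm_num : (0:ℝ) < 1/2)
  have h32C : Tendsto (fun t : ℝ => ((t ^ (-(3:ℝ)/2) : ℝ) : ℂ)) atTop (𝓝 0) := by
    simpa [Function.comp_def] using (Complex.continuous_ofReal.tendsto 0).comp h32
  -- ε → 0
  have hε0 : Tendsto ε atTop (𝓝 0) := by
    have h1 : Tendsto (fun t : ℝ =>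
        ((t ^ (-(3:ℝ)/2) : ℝ) : ℂ) * (((t ^ ((3:ℝ)/2) : ℝ) : ℂ) * ε t)) atTop (𝓝 0) := by
      simpa using h32C.mul hε
    refine h1.congr' ?_
    filter_upwards [eventually_gt_atTop (0:ℝ)] with t ht
    have h2 : (t : ℝ) ^ (-(3:ℝ)/2) * t ^ ((3:ℝ)/2) = 1 := by
      rw [← Real.rpow_add ht]; norm_num
    rw [← mul_assoc, ← Complex.ofReal_mul, h2]
    simp
  -- bound on ε
  have hεb : ∀ᶠ t : ℝ in atTop, ‖ε t‖ ≤ t ^ (-(3:ℝ)/2) := by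
    have h1 := hε.eventually (Metric.closedBall_mem_nhds (0:ℂ) one_pos)
    filter_upwards [h1, eventually_gt_atTop 0] with t h ht0
    have h2 : (0:ℝ) < t ^ ((3:ℝ)/2) := Real.rpow_pos_of_pos ht0 _
    rw [dist_zero_right, norm_mul,
      Complex.norm_real, Real.norm_eq_abs, abs_of_pos h2] at h
    have h3 : t ^ (-(3:ℝ)/2) = (t ^ ((3:ℝ)/2))⁻¹ := by
      rw [← Real.rpow_neg ht0.le]; norm_num
    rw [h3, inv_eq_one_div, le_div_iff₀ h2, mul_comm]
    exact h
  -- w → 0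
  have hw0 : Tendsto w atTop (𝓝 0) := by
    have h1 : Tendsto (fun t : ℝ => (a:ℂ)/t) atTop (𝓝 0) := by
      have h2 : Tendsto (fun t : ℝ => ((t⁻¹ : ℝ) : ℂ)) atTop (𝓝 0) := by
        simpa [Function.comp_def] using (Complex.continuous_ofReal.tendsto 0).comp tendsto_inv_atTop_zero
      have h3 := h2.const_mul (a:ℂ)
      simpa [div_eq_mul_inv] using h3
    simpa using (h1.add (h32C.const_mul b)).add hε0
  -- bound on w
  have hwC : ∀ᶠ t : ℝ in atTop, ‖w t‖ ≤ C / t := by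
    filter_upwards [hεb, eventually_ge_atTop (1:ℝ)] with t hεt ht1
    have ht0 : (0:ℝ) < t := lt_of_lt_of_le one_pos ht1
    have hinv : t ^ (-(3:ℝ)/2) ≤ 1 / t := by
      rw [one_div, ← Real.rpow_neg_one t]
      exact Real.rpow_le_rpow_of_exponent_le ht1 (by norm_num)
    have e1 : ‖(a:ℂ)/t‖ = |a| / t := by
      rw [norm_div, Complex.norm_real, Complex.norm_real, Real.norm_eq_abs, Real.norm_eq_abs, abs_of_pos ht0]
    have e2 : ‖b * ((t ^ (-(3:ℝ)/2) : ℝ):ℂ)‖ = ‖b‖ * t ^ (-(3:ℝ)/2) := by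
      rw [norm_mul, Complex.norm_real, Real.norm_eq_abs, abs_of_pos (Real.rpow_pos_of_pos ht0 _)]
    have h4 : ‖w t‖ ≤ ‖(a:ℂ)/t‖
        + ‖b * ((t ^ (-(3:ℝ)/2) : ℝ):ℂ)‖ + ‖ε t‖ :=
      (norm_add_le _ _).trans (add_le_add (norm_add_le _ _) le_rfl)
    have h5 : ‖b‖ * t ^ (-(3:ℝ)/2) ≤ ‖b‖ * (1/t) :=
      mul_le_mul_of_nonneg_left hinv (norm_nonneg b)
    have h6 : ‖ε t‖ ≤ 1 / t := hεt.trans hinv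
    have h7 : C / t = |a|/t + ‖b‖ * (1/t) + 1/t := by
      rw [hCdef]; field_simp
    rw [h7]
    calc ‖w t‖ ≤ _ := h4
      _ ≤ |a|/t + ‖b‖ * (1/t) + 1/t := by
          rw [e1, e2]; exact add_le_add (add_le_add le_rfl h5) h6
  -- the quadratic error term tends to 0
  have hE : Tendsto (fun t : ℝ =>
      ((Real.sqrt t : ℝ):ℂ) * ((t:ℂ) * (Complex.log (1 + w t) - w t))) atTop (𝓝 0) := by
    apply squeeze_zero_norm' (a := fun t => C^2 * t ^ (-(1:ℝ)/2))
    · filter_upwards [hwC, eventually_ge_atTop (1:ℝ),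
        hw0.eventually (Metric.closedBall_mem_nhds (0:ℂ) (by norm_num : (0:ℝ) < 1/2))]
        with t hC1 ht1 hw12
      have ht0 : (0:ℝ) < t := lt_of_lt_of_le one_pos ht1
      rw [dist_zero_right] at hw12
      have hlt : ‖w t‖ < 1 := lt_of_le_of_lt hw12 (by norm_num)
      have hlog := Complex.norm_log_one_add_sub_self_le hlt
      have hpos : (0:ℝ) < 1 - ‖w t‖ := by
        have := (norm_nonneg (w t)); linarith
      have hi : (1 - ‖w t‖)⁻¹ ≤ 2 := by
        rw [inv_le_comm₀ hpos two_pos]; linarith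
      have h2 : ‖w t‖^2 ≤ (C/t)^2 := by
        have hn : (0:ℝ) ≤ ‖w t‖ := norm_nonneg _
        have : ‖w t‖ ≤ C / t := hC1
        nlinarith
    -- combine
      have hb1 : ‖Complex.log (1 + w t) - w t‖ ≤ (C/t)^2 := by
        have h3 : ‖w t‖ ^ 2 * (1 - ‖w t‖)⁻¹ / 2 ≤ ‖w t‖^2 := by
          have := mul_le_mul_of_nonneg_left hi (sq_nonneg ‖w t‖)
          linarith
        exact hlog.trans (h3.trans h2)
      have hnorm : ‖((Real.sqrt t : ℝ):ℂ) * ((t:ℂ) * (Complex.log (1 + w t) - w t))‖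
          = Real.sqrt t * (t * ‖Complex.log (1 + w t) - w t‖) := by
        rw [norm_mul, norm_mul, Complex.norm_real, Complex.norm_real,
          Real.norm_eq_abs, Real.norm_eq_abs, abs_of_nonneg (Real.sqrt_nonneg t),
          abs_of_pos ht0]
      rw [hnorm]
      calc Real.sqrt t * (t * ‖Complex.log (1 + w t) - w t‖)
          ≤ Real.sqrt t * (t * (C/t)^2) := by
            apply mul_le_mul_of_nonneg_left _ (Real.sqrt_nonneg t)
            exact mul_le_mul_of_nonneg_left hb1 ht0.le
        _ = Real.sqrt t * t * (C/t)^2 := by ring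
        _ = C^2 * t ^ (-(1:ℝ)/2) := by
            have e : Real.sqrt t * t * (C/t)^2 = C^2 * (t^((1:ℝ)/2) * t^(1:ℝ) / t^(2:ℝ)) := by
              rw [Real.sqrt_eq_rpow, Real.rpow_one, div_pow, Real.rpow_two]; ring
            rw [e, ← Real.rpow_add ht0, ← Real.rpow_sub ht0]
            norm_num
    · simpa using h12.const_mul (C^2)
  -- main first-order limit: √t · u → b
  have hA : Tendsto (fun t : ℝ => ((Real.sqrt t : ℝ):ℂ) * u t) atTop (𝓝 b) := by
    have hrest : Tendsto (fun t : ℝ => b + ((t ^ ((3:ℝ)/2) : ℝ):ℂ) * ε t) atTop (𝓝 b) := by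
      simpa using (tendsto_const_nhds (x := b)).add hε
    have hsum := hE.add hrest
    rw [zero_add] at hsum
    refine hsum.congr' ?_
    filter_upwards [eventually_gt_atTop (0:ℝ)] with t ht0
    have htne : (t:ℂ) ≠ 0 := by exact_mod_cast ht0.ne'
    have r1 : Real.sqrt t * (t * t ^ (-(3:ℝ)/2)) = 1 := by
      have e : Real.sqrt t * (t * t ^ (-(3:ℝ)/2)) = t^((1:ℝ)/2) * (t^(1:ℝ) * t^(-(3:ℝ)/2)) := by
        rw [Real.sqrt_eq_rpow, Real.rpow_one]
      rw [e, ← Real.rpow_add ht0, ← Real.rpow_add ht0]; norm_num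
    have r2 : Real.sqrt t * t = t ^ ((3:ℝ)/2) := by
      have e : Real.sqrt t * t = t^((1:ℝ)/2) * t^(1:ℝ) := by
        rw [Real.sqrt_eq_rpow, Real.rpow_one]
      rw [e, ← Real.rpow_add ht0]; norm_num
    have e3 : (t:ℂ) * w t - a = b * ((t:ℂ) * ((t ^ (-(3:ℝ)/2) : ℝ):ℂ)) + (t:ℂ) * ε t := by
      simp only [hwdef]
      field_simp
      ring
    have split : ((Real.sqrt t : ℝ):ℂ) * u t
        = ((Real.sqrt t : ℝ):ℂ) * ((t:ℂ) * (Complex.log (1 + w t) - w t))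
          + ((Real.sqrt t : ℝ):ℂ) * ((t:ℂ) * w t - a) := by
      simp only [hudef]; ring
    have c1 : ((Real.sqrt t : ℝ):ℂ) * ((t:ℂ) * ((t ^ (-(3:ℝ)/2) : ℝ):ℂ)) = 1 := by
      have : ((Real.sqrt t : ℝ):ℂ) * ((t:ℂ) * ((t ^ (-(3:ℝ)/2) : ℝ):ℂ))
          = (((Real.sqrt t * (t * t ^ (-(3:ℝ)/2)) : ℝ)):ℂ) := by push_cast; ring
      rw [this, r1]; simp
    have c2 : ((Real.sqrt t : ℝ):ℂ) * (t:ℂ) = ((t ^ ((3:ℝ)/2) : ℝ):ℂ) := by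
      rw [← Complex.ofReal_mul, r2]
    have e4 : ((Real.sqrt t : ℝ):ℂ) * ((t:ℂ) * w t - a)
        = b + ((t ^ ((3:ℝ)/2) : ℝ):ℂ) * ε t := by
      calc ((Real.sqrt t : ℝ):ℂ) * ((t:ℂ) * w t - a)
          = b * (((Real.sqrt t : ℝ):ℂ) * ((t:ℂ) * ((t ^ (-(3:ℝ)/2) : ℝ):ℂ)))
            + (((Real.sqrt t : ℝ):ℂ) * (t:ℂ)) * ε t := by rw [e3]; ring
        _ = b + ((t ^ ((3:ℝ)/2) : ℝ):ℂ) * ε t := by rw [c1, c2, mul_one]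
    rw [split, e4]
  -- u → 0
  have hu0 : Tendsto u atTop (𝓝 0) := by
    have hsqr : Tendsto (fun t : ℝ => (Real.sqrt t)⁻¹) atTop (𝓝 0) := by
      refine h12.congr' ?_
      filter_upwards [eventually_gt_atTop (0:ℝ)] with t ht0
      rw [Real.sqrt_eq_rpow, ← Real.rpow_neg ht0.le]
      norm_num
    have hsq : Tendsto (fun t : ℝ => (((Real.sqrt t)⁻¹ : ℝ):ℂ)) atTop (𝓝 0) := by
      simpa [Function.comp_def] using (Complex.continuous_ofReal.tendsto 0).comp hsqr
    have hm := hsq.mul hA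
    rw [zero_mul] at hm
    refine hm.congr' ?_
    filter_upwards [eventually_gt_atTop (0:ℝ)] with t ht0
    have h1 : ((Real.sqrt t : ℝ):ℂ) ≠ 0 := by
      exact_mod_cast (Real.sqrt_pos.mpr ht0).ne'
    rw [← mul_assoc, ← Complex.ofReal_mul, inv_mul_cancel₀ (Real.sqrt_pos.mpr ht0).ne']
    simp
  -- √t(exp u − 1) → b
  have hB : Tendsto (fun t : ℝ => ((Real.sqrt t : ℝ):ℂ) * (Complex.exp (u t) - 1))
      atTop (𝓝 b) := by
    have herr : Tendsto (fun t : ℝ =>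
        ((Real.sqrt t : ℝ):ℂ) * (Complex.exp (u t) - 1 - u t)) atTop (𝓝 0) := by
      apply squeeze_zero_norm'
        (a := fun t => ‖((Real.sqrt t : ℝ):ℂ) * u t‖ * ‖u t‖)
      · filter_upwards [hu0.eventually (Metric.closedBall_mem_nhds (0:ℂ) one_pos)]
          with t hu1
        rw [dist_zero_right] at hu1
        have hle := Complex.norm_exp_sub_one_sub_id_le hu1
        have hn : ‖((Real.sqrt t : ℝ):ℂ) * (Complex.exp (u t) - 1 - u t)‖
            = Real.sqrt t * ‖Complex.exp (u t) - 1 - u t‖ := by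
          rw [norm_mul, Complex.norm_real, Real.norm_eq_abs,
            abs_of_nonneg (Real.sqrt_nonneg t)]
        rw [hn]
        calc Real.sqrt t * ‖Complex.exp (u t) - 1 - u t‖
            ≤ Real.sqrt t * (‖u t‖)^2 :=
              mul_le_mul_of_nonneg_left hle (Real.sqrt_nonneg t)
          _ = (Real.sqrt t * ‖u t‖) * ‖u t‖ := by ring
          _ = ‖((Real.sqrt t : ℝ):ℂ) * u t‖ * ‖u t‖ := by
              rw [norm_mul, Complex.norm_real, Real.norm_eq_abs, abs_of_nonneg (Real.sqrt_nonneg t)]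
      · have h1 : Tendsto (fun t : ℝ => ‖((Real.sqrt t : ℝ):ℂ) * u t‖) atTop
            (𝓝 ‖b‖) := (continuous_norm.tendsto b).comp hA
        have h2 : Tendsto (fun t : ℝ => ‖u t‖) atTop (𝓝 0) := by
          simpa [Function.comp_def] using (continuous_norm.tendsto 0).comp hu0
        simpa using h1.mul h2
    have hsum := herr.add hA
    rw [zero_add] at hsum
    refine hsum.congr fun t => ?_
    ring
  -- final assembly
  have hfin : Tendsto (fun t : ℝ => ((Real.sqrt t : ℝ):ℂ) *
      ((1 + (a : ℂ) / (t : ℂ) + b * ((t ^ (-(3:ℝ)/2) : ℝ) : ℂ) + ε t) ^ (t : ℂ) -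
        (Real.exp a : ℂ) * (1 + b / ((Real.sqrt t : ℝ) : ℂ)))) atTop (𝓝 0) := by
    have h1 : Tendsto (fun t : ℝ => ((Real.exp a : ℝ):ℂ) *
        (((Real.sqrt t : ℝ):ℂ) * (Complex.exp (u t) - 1) - b)) atTop (𝓝 0) := by
      have h2 := hB.sub (tendsto_const_nhds (x := b))
      rw [sub_self] at h2
      simpa using (tendsto_const_nhds (x := ((Real.exp a : ℝ):ℂ))).mul h2
    refine h1.congr' ?_
    filter_upwards [eventually_gt_atTop (0:ℝ),
      hw0.eventually (Metric.closedBall_mem_nhds (0:ℂ) (by norm_num : (0:ℝ) < 1/2))]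
      with t ht0 hw12
    rw [dist_zero_right] at hw12
    have hzw : (1 + (a : ℂ) / (t : ℂ) + b * ((t ^ (-(3:ℝ)/2) : ℝ) : ℂ) + ε t) = 1 + w t := by
      simp only [hwdef]; ring
    have hzne : (1 : ℂ) + w t ≠ 0 := by
      intro h
      have hw1 : w t = -1 := by linear_combination h
      rw [hw1] at hw12
      norm_num at hw12
    have hcpow : ((1:ℂ) + w t) ^ (t:ℂ) = Complex.exp ((t:ℂ) * Complex.log (1 + w t)) := by
      rw [Complex.cpow_def_of_ne_zero hzne, mul_comm]
    have hu : (t:ℂ) * Complex.log (1 + w t) = (a:ℂ) + u t := by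
      simp only [hudef]; ring
    have hsne : ((Real.sqrt t : ℝ):ℂ) ≠ 0 := by
      exact_mod_cast (Real.sqrt_pos.mpr ht0).ne'
    rw [hzw, hcpow, hu, Complex.exp_add, ← Complex.ofReal_exp]
    field_simp
    ring
  have hcomp := (continuous_norm.tendsto 0).comp hfin
  rw [norm_zero] at hcomp
  refine hcomp.congr fun t => ?_
  simp only [Function.comp_apply, norm_mul, Complex.norm_real, Real.norm_eq_abs,
    abs_of_nonneg (Real.sqrt_nonneg t)]
end
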